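/- arXiv:2202.11250 — 8 statements merged into one kernel-verified Lean document; each statement's English description precedes it below -/
import Mathlib

section
/- Fix integers k ≥ 2 and N ≥ 1 and a real number δ with 0 < δ and δ·N < 1. For a = (a_1,…,a_k) ∈ {1,…,N}^k define φ(a) ∈ ℝ^{2k−1} to be the point whose first coordinate is a_1 − δ·a_k, whose (2i−1)-th coordinate is a_i for each i ∈ {2,…,k−1}, whose (2i)-th coordinate is N − a_i for each i ∈ {1,…,k−1}, and whose (2k−1)-th coordinate is a_k (that is, φ(a) = (a_1 − δa_k, N − a_1, a_2, N − a_2, …, a_{k−1}, N − a_{k−1}, a_k)). Then for all a, b ∈ {1,…,N}^k, if φ(a)_i ≤ φ(b)_i for every coordinate i ∈ {1,…,2k−1}, then a = b. In particular φ is injective and the points φ(a), for distinct tuples a, are pairwise incomparable in the coordinatewise partial order on ℝ^{2k−1}. -/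
/-- The `j`-th coordinate (1-indexed, `1 ≤ j ≤ 2*k-1`) of the point
`φ(a) = (a₁ - δ·a_k, N - a₁, a₂, N - a₂, …, a_{k-1}, N - a_{k-1}, a_k)`,
where `a` is given (1-indexed) as a function `ℕ → ℝ`. -/
noncomputable def phiCoord (δ : ℝ) (N k : ℕ) (a : ℕ → ℝ) (j : ℕ) : ℝ :=
  if j = 1 then a 1 - δ * a k
  else if j = 2 * k - 1 then a k
  else if j % 2 = 1 then a ((j + 1) / 2)
  else (N : ℝ) - a (j / 2)

/-- The point `φ(a) ∈ ℝ^{2k-1}` associated to a tuple `a ∈ {1,…,N}^k`. -/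
noncomputable def phiPt (δ : ℝ) (N k : ℕ) (a : Fin k → ℕ) : Fin (2 * k - 1) → ℝ :=
  fun j =>
    phiCoord δ N k
      (fun i => if h : 1 ≤ i ∧ i ≤ k then ((a ⟨i - 1, by omega⟩ : ℕ) : ℝ) else 0)
      (j.1 + 1)

lemma phiPt_first (δ : ℝ) (N k : ℕ) (hk : 2 ≤ k) (c : Fin k → ℕ) :
    phiPt δ N k c ⟨0, by omega⟩ = (c ⟨0, by omega⟩ : ℝ) - δ * c ⟨k - 1, by omega⟩ := by
  unfold phiPt phiCoord
  simp only
  rw [if_pos trivial, dif_pos (by omega), dif_pos (by omega)]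

lemma phiPt_last (δ : ℝ) (N k : ℕ) (hk : 2 ≤ k) (c : Fin k → ℕ) :
    phiPt δ N k c ⟨2 * k - 2, by omega⟩ = (c ⟨k - 1, by omega⟩ : ℝ) := by
  unfold phiPt phiCoord
  simp only
  rw [if_neg (by omega), if_pos (by omega), dif_pos (by omega)]

lemma phiPt_odd (δ : ℝ) (N k : ℕ) (hk : 2 ≤ k) (c : Fin k → ℕ) (i : ℕ)
    (h1 : 1 ≤ i) (h2 : i ≤ k - 2) :
    phiPt δ N k c ⟨2 * i, by omega⟩ = (c ⟨i, by omega⟩ : ℝ) := by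
  unfold phiPt phiCoord
  simp only
  rw [if_neg (by omega), if_neg (by omega), if_pos (by omega), dif_pos (by omega)]
  exact_mod_cast congrArg (fun x => ((c x : ℕ) : ℝ)) (Fin.ext (by simp only [Fin.val_mk]; omega))

lemma phiPt_even (δ : ℝ) (N k : ℕ) (hk : 2 ≤ k) (c : Fin k → ℕ) (i : ℕ)
    (h2 : i ≤ k - 2) :
    phiPt δ N k c ⟨2 * i + 1, by omega⟩ = (N : ℝ) - (c ⟨i, by omega⟩ : ℝ) := by
  unfold phiPt phiCoord
  simp only
  rw [if_neg (by omega), if_neg (by omega), if_neg (by omega), dif_pos (by omega)]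
  exact congrArg (fun x => (N : ℝ) - ((c x : ℕ) : ℝ)) (Fin.ext (by simp only [Fin.val_mk]; omega))

/-- Two distinct initial points do not dominate each other: if every coordinate of
`φ(a)` is at most the corresponding coordinate of `φ(b)`, then `a = b`. -/
theorem phiPt_pairwise_incomparable (k N : ℕ) (hk : 2 ≤ k) (hN : 1 ≤ N)
    (δ : ℝ) (hδ : 0 < δ) (hδN : δ * N < 1)
    (a b : Fin k → ℕ)
    (ha : ∀ i, a i ∈ Finset.Icc 1 N) (hb : ∀ i, b i ∈ Finset.Icc 1 N)
    (hdom : ∀ j : Fin (2 * k - 1), phiPt δ N k a j ≤ phiPt δ N k b j) :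
    a = b := by
  have hlast := hdom ⟨2 * k - 2, by omega⟩
  rw [phiPt_last δ N k hk a, phiPt_last δ N k hk b] at hlast
  have hfirst := hdom ⟨0, by omega⟩
  rw [phiPt_first δ N k hk a, phiPt_first δ N k hk b] at hfirst
  have h1 := hdom ⟨2 * 0 + 1, by omega⟩
  rw [phiPt_even δ N k hk a 0 (by omega), phiPt_even δ N k hk b 0 (by omega)] at h1
  have hA1 : (a ⟨0, by omega⟩ : ℝ) = (b ⟨0, by omega⟩ : ℝ) := by
    nlinarith [mul_nonneg hδ.le (sub_nonneg.mpr hlast)]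
  have hAk : (a ⟨k - 1, by omega⟩ : ℝ) = (b ⟨k - 1, by omega⟩ : ℝ) := by
    nlinarith [mul_nonneg hδ.le (sub_nonneg.mpr hlast)]
  funext i
  by_cases h0 : i.1 = 0
  · have : i = ⟨0, by omega⟩ := Fin.ext h0
    rw [this]; exact_mod_cast hA1
  by_cases hkm : i.1 = k - 1
  · have : i = ⟨k - 1, by omega⟩ := Fin.ext hkm
    rw [this]; exact_mod_cast hAk
  · have hi1 : 1 ≤ i.1 := by omega
    have hi2 : i.1 ≤ k - 2 := by omega
    have ho := hdom ⟨2 * i.1, by omega⟩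
    rw [phiPt_odd δ N k hk a i.1 hi1 hi2, phiPt_odd δ N k hk b i.1 hi1 hi2] at ho
    have he := hdom ⟨2 * i.1 + 1, by omega⟩
    rw [phiPt_even δ N k hk a i.1 hi2, phiPt_even δ N k hk b i.1 hi2] at he
    have hr : (a ⟨i.1, i.2⟩ : ℝ) = (b ⟨i.1, i.2⟩ : ℝ) := le_antisymm ho (by linarith)
    have : a ⟨i.1, i.2⟩ = b ⟨i.1, i.2⟩ := by exact_mod_cast hr
    simpa using this
end

section
/- Fix integers k ≥ 2 and N ≥ 1, a real number δ with 0 < δ and δ·N < 1, and a real number W with W > N. For a = (a_1,…,a_k) ∈ {1,…,N}^k define φ(a) ∈ ℝ^{2k−1} to be the point whose first coordinate is a_1 − δ·a_k, whose (2i−1)-th coordinate is a_i for each i ∈ {2,…,k−1}, whose (2i)-th coordinate is N − a_i for each i ∈ {1,…,k−1}, and whose (2k−1)-th coordinate is a_k. Let M ⊆ {1,…,N}^k, let U_1, …, U_{k−1} ⊆ {1,…,N}, and let j ∈ {0,1,…,N}. Let P ⊆ ℝ^{2k−1} be the finite set consisting of: (i) the points φ(a) for a ∈ M; (ii) for each i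 ∈ {1,…,k−1} and each j' ∈ {1,…,N} ∖ U_i, the point β_{i,j'} whose (2i−1)-th coordinate is j', whose (2i)-th coordinate is N − j', and all of whose other coordinates equal W; and (iii) the point γ whose (2k−1)-th coordinate is j and all of whose other coordinates equal W. Then the number of maximal points of P equals (Σ_{i=1}^{k−1} (N − |U_i|)) + 1 + |{a ∈ M : a_i ∈ U_i for every i ∈ {1,…,k−1}, and a_k > j}|. -/
open scoped Classical

/-- The point `β_{i,j'} ∈ ℝ^{2k-1}` whose `(2i-1)`-th coordinate is `j'`, whose
`(2i)`-th coordinate is `N - j'`, and all other coordinates are `W`. -/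
noncomputable def betaPt (W : ℝ) (N k i j' : ℕ) : Fin (2 * k - 1) → ℝ :=
  fun m =>
    if m.1 + 1 = 2 * i - 1 then (j' : ℝ)
    else if m.1 + 1 = 2 * i then (N : ℝ) - (j' : ℝ)
    else W

/-- The point `γ ∈ ℝ^{2k-1}` whose `(2k-1)`-th coordinate is `j` and all other
coordinates are `W`. -/
noncomputable def gammaPt (W : ℝ) (k j : ℕ) : Fin (2 * k - 1) → ℝ :=
  fun m => if m.1 + 1 = 2 * k - 1 then (j : ℝ) else W

section Helpers

variable {δ W : ℝ} {N k : ℕ}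

lemma phiPt_apply (δ : ℝ) (N k : ℕ) (hk : 2 ≤ k) (a : Fin k → ℕ) (m : Fin (2 * k - 1)) :
    phiPt δ N k a m =
      if m.1 = 0 then (a ⟨0, by omega⟩ : ℝ) - δ * (a ⟨k - 1, by omega⟩ : ℝ)
      else if m.1 = 2 * k - 2 then (a ⟨k - 1, by omega⟩ : ℝ)
      else if m.1 % 2 = 0 then (a ⟨m.1 / 2, by omega⟩ : ℝ)
      else (N : ℝ) - (a ⟨(m.1 - 1) / 2, by omega⟩ : ℝ) := by
  have hm := m.2
  unfold phiPt phiCoord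
  split_ifs with h1 h2 h3 g1 g2 g3 g4 g5 g6 g7 g8 g9 <;> beta_reduce <;>
    first
      | rfl
      | (exfalso; omega)
      | (rw [dif_pos (by omega)]; (try rw [dif_pos (by omega)]);
         all_goals (congr <;> first | omega | exact Fin.ext (by simp only [Fin.val_mk]; try omega) | rfl))

lemma phi_zero (hk : 2 ≤ k) (a : Fin k → ℕ) :
    phiPt δ N k a ⟨0, by omega⟩ =
      (a ⟨0, by omega⟩ : ℝ) - δ * (a ⟨k - 1, by omega⟩ : ℝ) := by
  rw [phiPt_apply δ N k hk]; dsimp only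
  rw [if_pos rfl]

lemma phi_last (hk : 2 ≤ k) (a : Fin k → ℕ) :
    phiPt δ N k a ⟨2 * k - 2, by omega⟩ = (a ⟨k - 1, by omega⟩ : ℝ) := by
  rw [phiPt_apply δ N k hk]; dsimp only
  rw [if_neg (by omega), if_pos rfl]

lemma phi_odd (hk : 2 ≤ k) (i : ℕ) (h1 : 1 ≤ i) (h2 : i ≤ k - 1) (a : Fin k → ℕ) :
    phiPt δ N k a ⟨2 * i - 1, by omega⟩ = (N : ℝ) - (a ⟨i - 1, by omega⟩ : ℝ) := by
  rw [phiPt_apply δ N k hk]; dsimp only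
  rw [if_neg (by omega), if_neg (by omega), if_neg (by omega)]
  have hpq : (⟨(2 * i - 1 - 1) / 2, by omega⟩ : Fin k) = ⟨i - 1, by omega⟩ :=
    Fin.mk_eq_mk.mpr (by omega)
  rw [hpq]

lemma phi_even (hk : 2 ≤ k) (i : ℕ) (h1 : 2 ≤ i) (h2 : i ≤ k - 1) (a : Fin k → ℕ) :
    phiPt δ N k a ⟨2 * i - 2, by omega⟩ = (a ⟨i - 1, by omega⟩ : ℝ) := by
  rw [phiPt_apply δ N k hk]; dsimp only
  rw [if_neg (by omega), if_neg (by omega), if_pos (by omega)]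
  have hpq : (⟨(2 * i - 2) / 2, by omega⟩ : Fin k) = ⟨i - 1, by omega⟩ :=
    Fin.mk_eq_mk.mpr (by omega)
  rw [hpq]

lemma phi_le (hk : 2 ≤ k) (hδ : 0 ≤ δ) (a : Fin k → ℕ) (ha : ∀ t, a t ≤ N)
    (m : Fin (2 * k - 1)) : phiPt δ N k a m ≤ (N : ℝ) := by
  have har : ∀ t, (a t : ℝ) ≤ N := fun t => by exact_mod_cast ha t
  have hnn : ∀ t, (0 : ℝ) ≤ (a t : ℝ) := fun t => by positivity
  rw [phiPt_apply δ N k hk]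
  split_ifs
  · have h1 := har ⟨0, by omega⟩
    have h2 := hnn ⟨k - 1, by omega⟩
    nlinarith
  · exact har _
  · exact har _
  · have := hnn ⟨(m.1 - 1) / 2, by omega⟩; linarith

lemma beta_self1 (W : ℝ) (N k : ℕ) (hk : 2 ≤ k) (i j' : ℕ) (h1 : 1 ≤ i) (h2 : i ≤ k - 1) :
    betaPt W N k i j' ⟨2 * i - 2, by omega⟩ = (j' : ℝ) := by
  unfold betaPt; dsimp only
  rw [if_pos (by omega)]

lemma beta_self2 (W : ℝ) (N k : ℕ) (hk : 2 ≤ k) (i j' : ℕ) (h1 : 1 ≤ i) (h2 : i ≤ k - 1) :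
    betaPt W N k i j' ⟨2 * i - 1, by omega⟩ = (N : ℝ) - (j' : ℝ) := by
  unfold betaPt; dsimp only
  rw [if_neg (by omega), if_pos (by omega)]

lemma beta_other (W : ℝ) (N k : ℕ) (i j' : ℕ) (m : Fin (2 * k - 1))
    (hm1 : m.1 + 1 ≠ 2 * i - 1) (hm2 : m.1 + 1 ≠ 2 * i) :
    betaPt W N k i j' m = W := by
  unfold betaPt
  rw [if_neg hm1, if_neg hm2]

lemma gamma_last (W : ℝ) (k j : ℕ) (hk : 2 ≤ k) :
    gammaPt W k j ⟨2 * k - 2, by omega⟩ = (j : ℝ) := by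
  unfold gammaPt; dsimp only
  rw [if_pos (by omega)]

lemma gamma_other (W : ℝ) (k j : ℕ) (m : Fin (2 * k - 1)) (hm : m.1 ≠ 2 * k - 2) :
    gammaPt W k j m = W := by
  unfold gammaPt
  rw [if_neg (by omega)]


lemma phi_inj (hk : 2 ≤ k) (a b : Fin k → ℕ) (h : phiPt δ N k a = phiPt δ N k b) :
    a = b := by
  funext t
  have ht := t.2
  by_cases htk : t.1 = k - 1
  · have h1 := congrFun h ⟨2 * k - 2, by omega⟩
    rw [phi_last hk, phi_last hk] at h1
    have h2 : a ⟨k - 1, by omega⟩ = b ⟨k - 1, by omega⟩ := by exact_mod_cast h1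
    have he : t = (⟨k - 1, by omega⟩ : Fin k) := Fin.ext (by simp only [Fin.val_mk]; try omega)
    rw [he]; exact h2
  · have h1 := congrFun h ⟨2 * (t.1 + 1) - 1, by omega⟩
    rw [phi_odd hk (t.1 + 1) (by omega) (by omega),
        phi_odd hk (t.1 + 1) (by omega) (by omega)] at h1
    have h2 : a ⟨t.1 + 1 - 1, by omega⟩ = b ⟨t.1 + 1 - 1, by omega⟩ := by
      have : (a ⟨t.1 + 1 - 1, by omega⟩ : ℝ) = b ⟨t.1 + 1 - 1, by omega⟩ := by linarith
      exact_mod_cast this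
    have he : t = (⟨t.1 + 1 - 1, by omega⟩ : Fin k) := Fin.ext (by simp only [Fin.val_mk]; try omega)
    rw [he]; exact h2

/-- If `φ(b)` dominates `φ(a)` coordinatewise then `a = b`. -/
lemma phi_dom_phi (hk : 2 ≤ k) (hδ : 0 < δ) (a b : Fin k → ℕ)
    (h : ∀ m, phiPt δ N k a m ≤ phiPt δ N k b m) : a = b := by
  have hEv : ∀ (i : ℕ) (_h1 : 1 ≤ i) (_h2 : i ≤ k - 1),
      (b ⟨i - 1, by omega⟩ : ℝ) ≤ (a ⟨i - 1, by omega⟩ : ℝ) := by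
    intro i h1 h2
    have hh := h ⟨2 * i - 1, by omega⟩
    rw [phi_odd hk i h1 h2, phi_odd hk i h1 h2] at hh
    linarith
  have hOd : ∀ (i : ℕ) (_h1 : 2 ≤ i) (_h2 : i ≤ k - 1),
      (a ⟨i - 1, by omega⟩ : ℝ) ≤ (b ⟨i - 1, by omega⟩ : ℝ) := by
    intro i h1 h2
    have hh := h ⟨2 * i - 2, by omega⟩
    rw [phi_even hk i h1 h2, phi_even hk i h1 h2] at hh
    exact hh
  have hLast : (a ⟨k - 1, by omega⟩ : ℝ) ≤ (b ⟨k - 1, by omega⟩ : ℝ) := by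
    have hh := h ⟨2 * k - 2, by omega⟩
    rw [phi_last hk, phi_last hk] at hh
    exact hh
  have h0 : (a ⟨0, by omega⟩ : ℝ) - δ * (a ⟨k - 1, by omega⟩ : ℝ) ≤
      (b ⟨0, by omega⟩ : ℝ) - δ * (b ⟨k - 1, by omega⟩ : ℝ) := by
    have hh := h ⟨0, by omega⟩
    rw [phi_zero hk, phi_zero hk] at hh
    exact hh
  have hE1 := hEv 1 le_rfl (by omega)
  have hmul : δ * (a ⟨k - 1, by omega⟩ : ℝ) ≤ δ * (b ⟨k - 1, by omega⟩ : ℝ) :=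
    mul_le_mul_of_nonneg_left hLast hδ.le
  have hfirst : (a ⟨0, by omega⟩ : ℝ) = (b ⟨0, by omega⟩ : ℝ) := le_antisymm (by linarith) hE1
  have hlastEq : (a ⟨k - 1, by omega⟩ : ℝ) = (b ⟨k - 1, by omega⟩ : ℝ) := by
    have : δ * (b ⟨k - 1, by omega⟩ : ℝ) ≤ δ * (a ⟨k - 1, by omega⟩ : ℝ) := by linarith
    have := le_of_mul_le_mul_left this hδ
    exact le_antisymm hLast this
  funext t
  have ht := t.2
  by_cases htk : t.1 = k - 1
  · have he : t = (⟨k - 1, by omega⟩ : Fin k) := Fin.ext (by simp only [Fin.val_mk]; try omega)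
    rw [he]; exact_mod_cast hlastEq
  · by_cases ht0 : t.1 = 0
    · have he : t = (⟨0, by omega⟩ : Fin k) := Fin.ext (by simp only [Fin.val_mk]; try omega)
      rw [he]; exact_mod_cast hfirst
    · have h1 := hEv (t.1 + 1) (by omega) (by omega)
      have h2 := hOd (t.1 + 1) (by omega) (by omega)
      have he : t = (⟨t.1 + 1 - 1, by omega⟩ : Fin k) := Fin.ext (by simp only [Fin.val_mk]; try omega)
      rw [he]
      have : (a ⟨t.1 + 1 - 1, by omega⟩ : ℝ) = (b ⟨t.1 + 1 - 1, by omega⟩ : ℝ) :=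
        le_antisymm h2 h1
      exact_mod_cast this

/-- `φ(a)` is dominated by `β_{i, a_i}`. -/
lemma phi_dom_beta (hk : 2 ≤ k) (hδ : 0 ≤ δ) (hW : (N : ℝ) ≤ W) (i : ℕ)
    (h1 : 1 ≤ i) (h2 : i ≤ k - 1) (a : Fin k → ℕ) (ha : ∀ t, a t ≤ N)
    (m : Fin (2 * k - 1)) :
    phiPt δ N k a m ≤ betaPt W N k i (a ⟨i - 1, by omega⟩) m := by
  by_cases hm1 : m.1 + 1 = 2 * i - 1
  · have he : m = (⟨2 * i - 2, by omega⟩ : Fin (2 * k - 1)) := Fin.ext (by simp only [Fin.val_mk]; try omega)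
    rw [he, beta_self1 W N k hk i _ h1 h2]
    by_cases hi1 : i = 1
    · subst hi1
      have he2 : (⟨2 * 1 - 2, by omega⟩ : Fin (2 * k - 1)) = ⟨0, by omega⟩ :=
        Fin.ext (by simp only [Fin.val_mk]; try omega)
      rw [he2, phi_zero hk]
      have : (0 : ℝ) ≤ δ * (a ⟨k - 1, by omega⟩ : ℝ) := by positivity
      have he3 : (⟨1 - 1, by omega⟩ : Fin k) = ⟨0, by omega⟩ := Fin.ext (by simp only [Fin.val_mk]; try omega)
      rw [he3]; linarith
    · have he2 : (⟨2 * i - 2, by omega⟩ : Fin (2 * k - 1)) = ⟨2 * i - 2, by omega⟩ :=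
        rfl
      rw [phi_even hk i (by omega) h2]
  · by_cases hm2 : m.1 + 1 = 2 * i
    · have he : m = (⟨2 * i - 1, by omega⟩ : Fin (2 * k - 1)) := Fin.ext (by simp only [Fin.val_mk]; try omega)
      rw [he, beta_self2 W N k hk i _ h1 h2, phi_odd hk i h1 h2]
    · rw [beta_other W N k i _ m hm1 hm2]
      exact le_trans (phi_le hk hδ a ha m) hW

/-- `φ(a)` is dominated by `γ` when `a_k ≤ j`. -/
lemma phi_dom_gamma (hk : 2 ≤ k) (hδ : 0 ≤ δ) (hW : (N : ℝ) ≤ W) (j : ℕ)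
    (a : Fin k → ℕ) (ha : ∀ t, a t ≤ N) (haj : a ⟨k - 1, by omega⟩ ≤ j)
    (m : Fin (2 * k - 1)) :
    phiPt δ N k a m ≤ gammaPt W k j m := by
  by_cases hm : m.1 = 2 * k - 2
  · have he : m = (⟨2 * k - 2, by omega⟩ : Fin (2 * k - 1)) := Fin.ext (by simp only [Fin.val_mk]; try omega)
    rw [he, gamma_last W k j hk, phi_last hk]
    exact_mod_cast haj
  · rw [gamma_other W k j m hm]
    exact le_trans (phi_le hk hδ a ha m) hW

/-- If `β_{i,j'}` dominates `φ(a)` then `j' = a_i`. -/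
lemma beta_dominates_phi (hk : 2 ≤ k) (hN : 1 ≤ N) (hδ : 0 < δ) (hδN : δ * N < 1)
    (i j' : ℕ) (h1 : 1 ≤ i) (h2 : i ≤ k - 1) (a : Fin k → ℕ)
    (ha : ∀ t, 1 ≤ a t ∧ a t ≤ N)
    (h : ∀ m, phiPt δ N k a m ≤ betaPt W N k i j' m) :
    j' = a ⟨i - 1, by omega⟩ := by
  have hle : (j' : ℝ) ≤ (a ⟨i - 1, by omega⟩ : ℝ) := by
    have hh := h ⟨2 * i - 1, by omega⟩
    rw [phi_odd hk i h1 h2, beta_self2 W N k hk i j' h1 h2] at hh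
    linarith
  by_cases hi1 : i = 1
  · subst hi1
    have hh := h ⟨2 * 1 - 2, by omega⟩
    rw [beta_self1 W N k hk 1 j' le_rfl h2] at hh
    have he2 : (⟨2 * 1 - 2, by omega⟩ : Fin (2 * k - 1)) = ⟨0, by omega⟩ :=
      Fin.ext (by simp only [Fin.val_mk]; try omega)
    rw [he2, phi_zero hk] at hh
    -- a₀ - δ * a_{k-1} ≤ j', δ * a_{k-1} ≤ δ * N < 1
    have hak : (a ⟨k - 1, by omega⟩ : ℝ) ≤ N := by exact_mod_cast (ha _).2
    have hmul : δ * (a ⟨k - 1, by omega⟩ : ℝ) ≤ δ * N :=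
      mul_le_mul_of_nonneg_left hak hδ.le
    have hlt : (a ⟨0, by omega⟩ : ℝ) < (j' : ℝ) + 1 := by linarith
    have hnat : a ⟨0, by omega⟩ < j' + 1 := by exact_mod_cast hlt
    have hge : j' ≤ a ⟨1 - 1, by omega⟩ := by
      have : (j' : ℝ) ≤ (a ⟨1 - 1, by omega⟩ : ℝ) := hle
      exact_mod_cast this
    have he3 : (⟨1 - 1, by omega⟩ : Fin k) = ⟨0, by omega⟩ := Fin.ext (by simp only [Fin.val_mk]; try omega)
    rw [he3] at hge ⊢
    omega
  · have hh := h ⟨2 * i - 2, by omega⟩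
    rw [beta_self1 W N k hk i j' h1 h2, phi_even hk i (by omega) h2] at hh
    have hge : (a ⟨i - 1, by omega⟩ : ℝ) ≤ (j' : ℝ) := hh
    have : (j' : ℝ) = (a ⟨i - 1, by omega⟩ : ℝ) := le_antisymm hle hge
    exact_mod_cast this


lemma not_dom {n : ℕ} (p q : Fin n → ℝ) (m : Fin n) (h : q m < p m) :
    ¬ ∀ m, p m ≤ q m := fun h' => absurd (h' m) (not_le.mpr h)

lemma beta_last (W : ℝ) (N k : ℕ) (hk : 2 ≤ k) (i j' : ℕ) (h2 : i ≤ k - 1) :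
    betaPt W N k i j' ⟨2 * k - 2, by omega⟩ = W :=
  beta_other W N k i j' _ (by simp only [Fin.val_mk]; omega)
    (by simp only [Fin.val_mk]; omega)

lemma beta_ne_phi (hk : 2 ≤ k) (hW : (N : ℝ) < W) (i j' : ℕ) (h2 : i ≤ k - 1)
    (b : Fin k → ℕ) (hb : ∀ t, b t ≤ N) : betaPt W N k i j' ≠ phiPt δ N k b := by
  intro h
  have h1 := congrFun h ⟨2 * k - 2, by omega⟩
  rw [beta_last W N k hk i j' h2, phi_last hk] at h1
  have : (b ⟨k - 1, by omega⟩ : ℝ) ≤ N := by exact_mod_cast hb _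
  linarith

lemma gamma_ne_phi (hk : 2 ≤ k) (hδ : 0 ≤ δ) (hW : (N : ℝ) < W) (j : ℕ)
    (b : Fin k → ℕ) (hb : ∀ t, b t ≤ N) : gammaPt W k j ≠ phiPt δ N k b := by
  intro h
  have h1 := congrFun h ⟨0, by omega⟩
  rw [gamma_other W k j _ (by simp only [Fin.val_mk]; omega)] at h1
  have h2 := phi_le (δ := δ) hk hδ b hb ⟨0, by omega⟩
  linarith

lemma gamma_ne_beta (hk : 2 ≤ k) (hW : (N : ℝ) < W) (j i j' : ℕ) (hj : j ≤ N)
    (h2 : i ≤ k - 1) : gammaPt W k j ≠ betaPt W N k i j' := by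
  intro h
  have h1 := congrFun h ⟨2 * k - 2, by omega⟩
  rw [gamma_last W k j hk, beta_last W N k hk i j' h2] at h1
  have : (j : ℝ) ≤ N := by exact_mod_cast hj
  linarith

lemma beta_inj (hk : 2 ≤ k) (hW : (N : ℝ) < W) (i j' i' j'' : ℕ)
    (h1 : 1 ≤ i) (h2 : i ≤ k - 1) (h1' : 1 ≤ i') (h2' : i' ≤ k - 1)
    (hj' : j' ≤ N) (hj'' : j'' ≤ N)
    (h : betaPt W N k i j' = betaPt W N k i' j'') : i = i' ∧ j' = j'' := by
  have hii : i = i' := by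
    by_contra hne
    have hc := congrFun h ⟨2 * i' - 2, by omega⟩
    rw [beta_self1 W N k hk i' j'' h1' h2'] at hc
    rw [beta_other W N k i j' _ (by simp only [Fin.val_mk]; omega)
      (by simp only [Fin.val_mk]; omega)] at hc
    have : (j'' : ℝ) ≤ N := by exact_mod_cast hj''
    linarith
  subst hii
  refine ⟨rfl, ?_⟩
  have hc := congrFun h ⟨2 * i - 2, by omega⟩
  rw [beta_self1 W N k hk i j' h1 h2, beta_self1 W N k hk i j'' h1 h2] at hc
  exact_mod_cast hc

lemma beta_not_dom_by_phi (hk : 2 ≤ k) (hW : (N : ℝ) < W) (i j' : ℕ) (h2 : i ≤ k - 1)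
    (b : Fin k → ℕ) (hb : ∀ t, b t ≤ N) :
    ¬ ∀ m, betaPt W N k i j' m ≤ phiPt δ N k b m := by
  apply not_dom _ _ ⟨2 * k - 2, by omega⟩
  rw [beta_last W N k hk i j' h2, phi_last hk]
  have : (b ⟨k - 1, by omega⟩ : ℝ) ≤ N := by exact_mod_cast hb _
  linarith

lemma beta_not_dom_by_gamma (hk : 2 ≤ k) (hW : (N : ℝ) < W) (j i j' : ℕ) (hj : j ≤ N)
    (h2 : i ≤ k - 1) : ¬ ∀ m, betaPt W N k i j' m ≤ gammaPt W k j m := by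
  apply not_dom _ _ ⟨2 * k - 2, by omega⟩
  rw [beta_last W N k hk i j' h2, gamma_last W k j hk]
  have : (j : ℝ) ≤ N := by exact_mod_cast hj
  linarith

lemma beta_not_dom_by_beta (hk : 2 ≤ k) (hW : (N : ℝ) < W) (i j' i' j'' : ℕ)
    (h1 : 1 ≤ i) (h2 : i ≤ k - 1) (h1' : 1 ≤ i') (h2' : i' ≤ k - 1)
    (hj' : j' ≤ N) (hj'' : j'' ≤ N)
    (hne : betaPt W N k i' j'' ≠ betaPt W N k i j') :
    ¬ ∀ m, betaPt W N k i j' m ≤ betaPt W N k i' j'' m := by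
  intro h
  by_cases hii : i = i'
  · subst hii
    have ha := h ⟨2 * i - 2, by omega⟩
    rw [beta_self1 W N k hk i j' h1 h2, beta_self1 W N k hk i j'' h1 h2] at ha
    have hb := h ⟨2 * i - 1, by omega⟩
    rw [beta_self2 W N k hk i j' h1 h2, beta_self2 W N k hk i j'' h1 h2] at hb
    have : (j' : ℝ) = j'' := by linarith
    have : j' = j'' := by exact_mod_cast this
    subst this
    exact hne rfl
  · have hc := h ⟨2 * i' - 2, by omega⟩
    rw [beta_self1 W N k hk i' j'' h1' h2'] at hc
    rw [beta_other W N k i j' _ (by simp only [Fin.val_mk]; omega)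
      (by simp only [Fin.val_mk]; omega)] at hc
    have : (j'' : ℝ) ≤ N := by exact_mod_cast hj''
    linarith

lemma gamma_not_dom_by_phi (hk : 2 ≤ k) (hδ : 0 ≤ δ) (hW : (N : ℝ) < W) (j : ℕ)
    (b : Fin k → ℕ) (hb : ∀ t, b t ≤ N) :
    ¬ ∀ m, gammaPt W k j m ≤ phiPt δ N k b m := by
  apply not_dom _ _ ⟨0, by omega⟩
  rw [gamma_other W k j _ (by simp only [Fin.val_mk]; omega)]
  have h2 := phi_le (δ := δ) hk hδ b hb ⟨0, by omega⟩
  linarith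

lemma gamma_not_dom_by_beta (hk : 2 ≤ k) (hW : (N : ℝ) < W) (j i j' : ℕ)
    (h1 : 1 ≤ i) (h2 : i ≤ k - 1) (hj' : j' ≤ N) :
    ¬ ∀ m, gammaPt W k j m ≤ betaPt W N k i j' m := by
  apply not_dom _ _ ⟨2 * i - 2, by omega⟩
  rw [beta_self1 W N k hk i j' h1 h2,
    gamma_other W k j _ (by simp only [Fin.val_mk]; omega)]
  have : (j' : ℝ) ≤ N := by exact_mod_cast hj'
  linarith

lemma phi_not_dom_by_gamma (hk : 2 ≤ k) (j : ℕ) (a : Fin k → ℕ)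
    (haj : j < a ⟨k - 1, by omega⟩) :
    ¬ ∀ m, phiPt δ N k a m ≤ gammaPt W k j m := by
  apply not_dom _ _ ⟨2 * k - 2, by omega⟩
  rw [gamma_last W k j hk, phi_last hk]
  exact_mod_cast haj

end Helpers

/-- The "good" tuples: all first `k-1` coordinates in the corresponding `U i`,
and last coordinate exceeding `j`. -/
def goodT (U : ℕ → Finset ℕ) (j : ℕ) {k : ℕ} (hk : 1 ≤ k) (a : Fin k → ℕ) : Prop :=
  (∀ i : Fin k, (i : ℕ) + 1 ≤ k - 1 → a i ∈ U ((i : ℕ) + 1)) ∧ j < a ⟨k - 1, by omega⟩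

/-- Counting the maximal (skyline) points in the point set arising in the reduction
from OuMv_k to Dynamic Skyline Points Counting in `ℝ^{2k-1}`. -/
theorem skyline_count_core (k N : ℕ) (hk : 2 ≤ k) (hN : 1 ≤ N)
    (δ : ℝ) (hδ : 0 < δ) (hδN : δ * N < 1)
    (W : ℝ) (hW : (N : ℝ) < W)
    (M : Finset (Fin k → ℕ)) (hM : ∀ a ∈ M, ∀ i, a i ∈ Finset.Icc 1 N)
    (U : ℕ → Finset ℕ) (hU : ∀ i, U i ⊆ Finset.Icc 1 N)
    (j : ℕ) (hj : j ≤ N)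
    (P : Finset (Fin (2 * k - 1) → ℝ))
    (hP : P = M.image (phiPt δ N k) ∪
        (Finset.Icc 1 (k - 1)).biUnion
          (fun i => (Finset.Icc 1 N \ U i).image (fun j' => betaPt W N k i j')) ∪
        {gammaPt W k j}) :
    {p : Fin (2 * k - 1) → ℝ | p ∈ P ∧ ∀ q ∈ P, q ≠ p → ¬ ∀ m, p m ≤ q m}.ncard =
      (∑ i ∈ Finset.Icc 1 (k - 1), (N - (U i).card)) + 1 +
        {a : Fin k → ℕ | a ∈ M ∧
          (∀ i : Fin k, (i : ℕ) + 1 ≤ k - 1 → a i ∈ U ((i : ℕ) + 1)) ∧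
          j < a ⟨k - 1, by omega⟩}.ncard := by
  classical
  have hk1 : 1 ≤ k := by omega
  have hMa : ∀ a ∈ M, ∀ t, 1 ≤ a t ∧ a t ≤ N := fun a ha t => by
    have := hM a ha t; rw [Finset.mem_Icc] at this; exact this
  have hMle : ∀ a ∈ M, ∀ t, a t ≤ N := fun a ha t => (hMa a ha t).2
  set G := gammaPt W k j with hG
  set Fβ := (Finset.Icc 1 (k - 1)).biUnion
      (fun i => (Finset.Icc 1 N \ U i).image (fun j' => betaPt W N k i j')) with hFβ
  set Fφ := (M.filter (goodT U j hk1)).image (phiPt δ N k) with hFφ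
  -- characterization of membership in `P`
  have hPmem : ∀ q, q ∈ P ↔ ((∃ a ∈ M, phiPt δ N k a = q) ∨
      (∃ i, (1 ≤ i ∧ i ≤ k - 1) ∧ ∃ j', j' ∈ Finset.Icc 1 N \ U i ∧ betaPt W N k i j' = q) ∨
      q = G) := by
    intro q
    rw [hP, hFβ]
    simp only [Finset.mem_union, Finset.mem_image, Finset.mem_biUnion, Finset.mem_singleton,
      Finset.mem_Icc, hG]
    constructor
    · rintro ((⟨a, ha, rfl⟩ | ⟨i, hi, j', hj', rfl⟩) | rfl)
      · exact Or.inl ⟨a, ha, rfl⟩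
      · exact Or.inr (Or.inl ⟨i, hi, j', hj', rfl⟩)
      · exact Or.inr (Or.inr rfl)
    · rintro (⟨a, ha, rfl⟩ | ⟨i, hi, j', hj', rfl⟩ | rfl)
      · exact Or.inl (Or.inl ⟨a, ha, rfl⟩)
      · exact Or.inl (Or.inr ⟨i, hi, j', hj', rfl⟩)
      · exact Or.inr rfl
  -- maximality of the β points
  have hmaxβ : ∀ i j', 1 ≤ i → i ≤ k - 1 → j' ∈ Finset.Icc 1 N \ U i →
      ∀ q ∈ P, q ≠ betaPt W N k i j' → ¬ ∀ m, betaPt W N k i j' m ≤ q m := by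
    intro i j' hi1 hi2 hj' q hq hne
    have hj'N : j' ≤ N := by
      have := (Finset.mem_sdiff.mp hj').1; rw [Finset.mem_Icc] at this; exact this.2
    rcases (hPmem q).mp hq with ⟨b, hb, rfl⟩ | ⟨i', ⟨hi1', hi2'⟩, j'', hj'', rfl⟩ | rfl
    · exact beta_not_dom_by_phi hk hW i j' hi2 b (hMle b hb)
    · have hj''N : j'' ≤ N := by
        have := (Finset.mem_sdiff.mp hj'').1; rw [Finset.mem_Icc] at this; exact this.2
      exact beta_not_dom_by_beta hk hW i j' i' j'' hi1 hi2 hi1' hi2' hj'N hj''N hne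
    · exact beta_not_dom_by_gamma hk hW j i j' hj hi2
  -- maximality of γ
  have hmaxγ : ∀ q ∈ P, q ≠ G → ¬ ∀ m, G m ≤ q m := by
    intro q hq hne
    rcases (hPmem q).mp hq with ⟨b, hb, rfl⟩ | ⟨i', ⟨hi1', hi2'⟩, j'', hj'', rfl⟩ | rfl
    · exact gamma_not_dom_by_phi hk hδ.le hW j b (hMle b hb)
    · have hj''N : j'' ≤ N := by
        have := (Finset.mem_sdiff.mp hj'').1; rw [Finset.mem_Icc] at this; exact this.2
      exact gamma_not_dom_by_beta hk hW j i' j'' hi1' hi2' hj''N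
    · exact absurd rfl hne
  -- maximality of the good φ points
  have hmaxφ : ∀ a ∈ M, goodT U j hk1 a →
      ∀ q ∈ P, q ≠ phiPt δ N k a → ¬ ∀ m, phiPt δ N k a m ≤ q m := by
    intro a haM hg q hq hne
    rcases (hPmem q).mp hq with ⟨b, hb, rfl⟩ | ⟨i', ⟨hi1', hi2'⟩, j'', hj'', rfl⟩ | rfl
    · intro hdom
      have hab := phi_dom_phi hk hδ a b hdom
      exact hne (by rw [hab])
    · intro hdom
      have hjj := beta_dominates_phi hk hN hδ hδN i' j'' hi1' hi2' a (hMa a haM) hdom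
      have hmem : a ⟨i' - 1, by omega⟩ ∈ U i' := by
        have h2 := hg.1 ⟨i' - 1, by omega⟩ (by simp only [Fin.val_mk]; omega)
        simp only [Fin.val_mk] at h2
        have hidx : i' - 1 + 1 = i' := by omega
        rwa [hidx] at h2
      rw [hjj] at hj''
      exact absurd hmem (Finset.mem_sdiff.mp hj'').2
    · exact phi_not_dom_by_gamma hk j a hg.2
  -- every point of the candidate set is in `P`
  have hQP : ∀ p ∈ Fβ ∪ {G} ∪ Fφ, p ∈ P := by
    intro p hp
    rcases Finset.mem_union.mp hp with hp | hp
    · rcases Finset.mem_union.mp hp with hp | hp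
      · obtain ⟨i, hiIcc, himg⟩ := Finset.mem_biUnion.mp hp
        obtain ⟨j', hj', rfl⟩ := Finset.mem_image.mp himg
        rw [Finset.mem_Icc] at hiIcc
        exact (hPmem _).mpr (Or.inr (Or.inl ⟨i, hiIcc, j', hj', rfl⟩))
      · rw [Finset.mem_singleton] at hp
        exact (hPmem _).mpr (Or.inr (Or.inr hp))
    · obtain ⟨a, haf, rfl⟩ := Finset.mem_image.mp hp
      rw [Finset.mem_filter] at haf
      exact (hPmem _).mpr (Or.inl ⟨a, haf.1, rfl⟩)
  -- the skyline is exactly the candidate set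
  have hkey : {p : Fin (2 * k - 1) → ℝ | p ∈ P ∧ ∀ q ∈ P, q ≠ p → ¬ ∀ m, p m ≤ q m} =
      ↑(Fβ ∪ {G} ∪ Fφ) := by
    ext p
    simp only [Set.mem_setOf_eq, Finset.mem_coe]
    constructor
    · rintro ⟨hpP, hmax⟩
      rcases (hPmem p).mp hpP with ⟨a, haM, rfl⟩ | ⟨i, ⟨hi1, hi2⟩, j', hj', rfl⟩ | rfl
      · apply Finset.mem_union_right
        rw [hFφ]
        apply Finset.mem_image_of_mem
        rw [Finset.mem_filter]
        refine ⟨haM, ?_, ?_⟩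
        · intro t ht
          by_contra hnot
          have hqP : betaPt W N k (t.1 + 1) (a t) ∈ P := by
            apply (hPmem _).mpr
            refine Or.inr (Or.inl ⟨t.1 + 1, ⟨by omega, ht⟩, a t, ?_, rfl⟩)
            rw [Finset.mem_sdiff, Finset.mem_Icc]
            exact ⟨⟨(hMa a haM t).1, (hMa a haM t).2⟩, hnot⟩
          have hne : betaPt W N k (t.1 + 1) (a t) ≠ phiPt δ N k a :=
            beta_ne_phi hk hW _ _ ht a (hMle a haM)
          apply hmax _ hqP hne
          have hdom := phi_dom_beta (δ := δ) hk hδ.le hW.le (t.1 + 1)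
            (by omega) ht a (hMle a haM)
          have hte : (⟨t.1 + 1 - 1, by omega⟩ : Fin k) = t :=
            Fin.ext (by simp only [Fin.val_mk]; omega)
          rwa [hte] at hdom
        · by_contra hnot
          push_neg at hnot
          have hqP : G ∈ P := (hPmem G).mpr (Or.inr (Or.inr rfl))
          have hne : G ≠ phiPt δ N k a := gamma_ne_phi hk hδ.le hW j a (hMle a haM)
          exact hmax _ hqP hne (phi_dom_gamma hk hδ.le hW.le j a (hMle a haM) hnot)
      · apply Finset.mem_union_left
        apply Finset.mem_union_left
        rw [hFβ, Finset.mem_biUnion]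
        exact ⟨i, Finset.mem_Icc.mpr ⟨hi1, hi2⟩, Finset.mem_image_of_mem _ hj'⟩
      · exact Finset.mem_union_left _ (Finset.mem_union_right _ (Finset.mem_singleton_self _))
    · intro hpQ
      refine ⟨hQP p hpQ, ?_⟩
      rcases Finset.mem_union.mp hpQ with hp | hp
      · rcases Finset.mem_union.mp hp with hp | hp
        · obtain ⟨i, hiIcc, himg⟩ := Finset.mem_biUnion.mp hp
          obtain ⟨j', hj', rfl⟩ := Finset.mem_image.mp himg
          rw [Finset.mem_Icc] at hiIcc
          exact hmaxβ i j' hiIcc.1 hiIcc.2 hj'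
        · rw [Finset.mem_singleton] at hp
          subst hp
          exact hmaxγ
      · obtain ⟨a, haf, rfl⟩ := Finset.mem_image.mp hp
        rw [Finset.mem_filter] at haf
        exact hmaxφ a haf.1 haf.2
  -- disjointness facts
  have hdisj1 : Disjoint Fβ ({G} : Finset (Fin (2 * k - 1) → ℝ)) := by
    rw [Finset.disjoint_singleton_right]
    intro hmem
    obtain ⟨i, hiIcc, himg⟩ := Finset.mem_biUnion.mp hmem
    obtain ⟨j', hj', heq⟩ := Finset.mem_image.mp himg
    rw [Finset.mem_Icc] at hiIcc
    exact gamma_ne_beta hk hW j i j' hj hiIcc.2 heq.symm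
  have hdisj2 : Disjoint (Fβ ∪ {G}) Fφ := by
    rw [Finset.disjoint_left]
    intro p hp hpφ
    obtain ⟨a, haf, rfl⟩ := Finset.mem_image.mp hpφ
    rw [Finset.mem_filter] at haf
    rcases Finset.mem_union.mp hp with hp | hp
    · obtain ⟨i, hiIcc, himg⟩ := Finset.mem_biUnion.mp hp
      obtain ⟨j', hj', heq⟩ := Finset.mem_image.mp himg
      rw [Finset.mem_Icc] at hiIcc
      exact beta_ne_phi hk hW i j' hiIcc.2 a (hMle a haf.1) heq
    · rw [Finset.mem_singleton] at hp
      exact gamma_ne_phi hk hδ.le hW j a (hMle a haf.1) hp.symm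
  -- cardinality of Fβ
  have hdisjβ : ∀ x ∈ Finset.Icc 1 (k - 1), ∀ y ∈ Finset.Icc 1 (k - 1), x ≠ y →
      Disjoint ((Finset.Icc 1 N \ U x).image (fun j' => betaPt W N k x j'))
        ((Finset.Icc 1 N \ U y).image (fun j' => betaPt W N k y j')) := by
    intro x hx y hy hxy
    rw [Finset.mem_Icc] at hx hy
    rw [Finset.disjoint_left]
    intro p hp hp2
    obtain ⟨j', hj', rfl⟩ := Finset.mem_image.mp hp
    obtain ⟨j'', hj'', heq⟩ := Finset.mem_image.mp hp2
    have hj'N : j' ≤ N := by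
      have := (Finset.mem_sdiff.mp hj').1; rw [Finset.mem_Icc] at this; exact this.2
    have hj''N : j'' ≤ N := by
      have := (Finset.mem_sdiff.mp hj'').1; rw [Finset.mem_Icc] at this; exact this.2
    exact hxy ((beta_inj hk hW y j'' x j' hy.1 hy.2 hx.1 hx.2 hj''N hj'N heq).1).symm
  have hcardβ : Fβ.card = ∑ i ∈ Finset.Icc 1 (k - 1), (N - (U i).card) := by
    rw [hFβ, Finset.card_biUnion hdisjβ]
    refine Finset.sum_congr rfl ?_
    intro i hi
    rw [Finset.mem_Icc] at hi
    have hinj : Set.InjOn (fun j' => betaPt W N k i j') ↑(Finset.Icc 1 N \ U i) := by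
      intro x hx y hy hxy
      rw [Finset.mem_coe, Finset.mem_sdiff, Finset.mem_Icc] at hx hy
      exact (beta_inj hk hW i x i y hi.1 hi.2 hi.1 hi.2 hx.1.2 hy.1.2 hxy).2
    rw [Finset.card_image_of_injOn hinj, Finset.card_sdiff_of_subset (hU i), Nat.card_Icc]
    omega
  have hcardφ : Fφ.card = (M.filter (goodT U j hk1)).card := by
    rw [hFφ]
    exact Finset.card_image_of_injOn (fun a _ b _ h => phi_inj hk a b h)
  have hrhs : {a : Fin k → ℕ | a ∈ M ∧
      (∀ i : Fin k, (i : ℕ) + 1 ≤ k - 1 → a i ∈ U ((i : ℕ) + 1)) ∧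
      j < a ⟨k - 1, by omega⟩} = ↑(M.filter (goodT U j hk1)) := by
    ext a
    simp only [Set.mem_setOf_eq, Finset.coe_filter, goodT]
  rw [hkey, Set.ncard_coe_finset, hrhs, Set.ncard_coe_finset,
    Finset.card_union_of_disjoint hdisj2, Finset.card_union_of_disjoint hdisj1,
    Finset.card_singleton, hcardβ, hcardφ]
end

section
/- Let N ≥ 1 and k ≥ 1 be integers and let U_1, …, U_k ⊆ {1,…,N}. For each i ∈ {1,…,k} and j ∈ U_i consider the two open halfspaces H⁻_{i,j} = {x ∈ ℝ^k : x_i < j − 1/2} and H⁺_{i,j} = {x ∈ ℝ^k : x_i > j + 1/2}. For an integer point a ∈ {1,…,N}^k (viewed as a point of ℝ^k), let c(a) be the number of these halfspaces that contain a. Then (a) c(a) = Σ_{i=1}^{k} |U_i| − |{i ∈ {1,…,k} : a_i ∈ U_i}|; and (b) for every nonempty finite M ⊆ {1,…,N}^k, the minimum of c(a) over a ∈ M equals Σ_{i=1}^{k} |U_i| − k if and only if there exists a ∈ M with a_i ∈ U_i for every i ∈ {1,…,k}. -/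
open scoped Classical

private lemma pair_eq (a j : ℕ) :
    ((if (a : ℝ) < (j : ℝ) - 1 / 2 then 1 else 0) +
      (if (j : ℝ) + 1 / 2 < (a : ℝ) then 1 else 0) : ℕ) = if a = j then 0 else 1 := by
  rcases lt_trichotomy a j with h | h | h
  · have h1 : (a : ℝ) < (j : ℝ) - 1 / 2 := by
      have : (a : ℝ) + 1 ≤ (j : ℝ) := by exact_mod_cast h
      linarith
    have h2 : ¬ ((j : ℝ) + 1 / 2 < (a : ℝ)) := by linarith
    rw [if_pos h1, if_neg h2, if_neg (Nat.ne_of_lt h)]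
  · subst h
    have h1 : ¬ ((a : ℝ) < (a : ℝ) - 1 / 2) := by linarith
    have h2 : ¬ ((a : ℝ) + 1 / 2 < (a : ℝ)) := by linarith
    simp [h1, h2]
  · have h2 : (j : ℝ) + 1 / 2 < (a : ℝ) := by
      have : (j : ℝ) + 1 ≤ (a : ℝ) := by exact_mod_cast h
      linarith
    have h1 : ¬ ((a : ℝ) < (j : ℝ) - 1 / 2) := by linarith
    rw [if_neg h1, if_pos h2, if_neg (Nat.ne_of_lt h).symm]

private lemma c_formula (k : ℕ) (U : Fin k → Finset ℕ) (c : (Fin k → ℕ) → ℕ)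
    (hc : ∀ a : Fin k → ℕ, c a = ∑ i : Fin k, ∑ j ∈ U i,
        ((if (a i : ℝ) < (j : ℝ) - 1 / 2 then 1 else 0) +
          (if (j : ℝ) + 1 / 2 < (a i : ℝ) then 1 else 0)))
    (a : Fin k → ℕ) :
    (c a : ℤ) = (∑ i : Fin k, ((U i).card : ℤ)) -
      ((Finset.univ.filter (fun i => a i ∈ U i)).card : ℤ) := by
  have h1 : c a = ∑ i : Fin k, ∑ j ∈ U i, (if a i = j then 0 else 1) := by
    rw [hc a]
    exact Finset.sum_congr rfl fun i _ => Finset.sum_congr rfl fun j _ => pair_eq (a i) j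
  have h2 : ∀ i : Fin k, (∑ j ∈ U i, (if a i = j then 0 else 1) : ℤ) =
      ((U i).card : ℤ) - (if a i ∈ U i then 1 else 0) := by
    intro i
    have : (∑ j ∈ U i, (if a i = j then 0 else 1) : ℤ)
        = ∑ j ∈ U i, (1 - if a i = j then 1 else 0) := by
      refine Finset.sum_congr rfl fun j _ => ?_
      by_cases h : a i = j <;> simp [h]
    rw [this, Finset.sum_sub_distrib, Finset.sum_const, Finset.sum_ite_eq (U i) (a i) (fun _ => (1:ℤ))]
    simp
  have h3 : (∑ i : Fin k, (if a i ∈ U i then (1:ℤ) else 0)) =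
      ((Finset.univ.filter (fun i => a i ∈ U i)).card : ℤ) := by
    simp [Finset.sum_ite_eq, Finset.sum_boole]
  calc (c a : ℤ) = ∑ i : Fin k, ∑ j ∈ U i, (if a i = j then 0 else 1) := by
        rw [h1]; push_cast; rfl
    _ = ∑ i : Fin k, (((U i).card : ℤ) - (if a i ∈ U i then 1 else 0)) :=
        Finset.sum_congr rfl fun i _ => h2 i
    _ = (∑ i : Fin k, ((U i).card : ℤ)) -
          ((Finset.univ.filter (fun i => a i ∈ U i)).card : ℤ) := by
        rw [Finset.sum_sub_distrib, h3]

/-- Correctness core of the reduction from OuMv_k to Chan's Halfspace problem in `ℝ^k`: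
`c a` counts, over `i ∈ {1,…,k}` and `j ∈ U i`, the open halfspaces
`{x : x i < j - 1/2}` and `{x : x i > j + 1/2}` containing the integer point `a`.
(a) `c a = Σ_i |U i| − |{i : a i ∈ U i}|`; (b) for nonempty finite `M ⊆ {1,…,N}^k`,
`min_{a ∈ M} c a = Σ_i |U i| − k` iff some `a ∈ M` has `a i ∈ U i` for every `i`. -/
theorem chans_halfspace_core (N k : ℕ) (hN : 1 ≤ N) (hk : 1 ≤ k)
    (U : Fin k → Finset ℕ) (hU : ∀ i, U i ⊆ Finset.Icc 1 N)
    (c : (Fin k → ℕ) → ℕ)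
    (hc : ∀ a : Fin k → ℕ, c a = ∑ i : Fin k, ∑ j ∈ U i,
        ((if (a i : ℝ) < (j : ℝ) - 1 / 2 then 1 else 0) +
          (if (j : ℝ) + 1 / 2 < (a i : ℝ) then 1 else 0))) :
    (∀ a : Fin k → ℕ, (∀ i, a i ∈ Finset.Icc 1 N) →
        (c a : ℤ) = (∑ i : Fin k, ((U i).card : ℤ)) -
          ((Finset.univ.filter (fun i => a i ∈ U i)).card : ℤ)) ∧
      (∀ M : Finset (Fin k → ℕ), ∀ hMne : M.Nonempty,
        (∀ a ∈ M, ∀ i, a i ∈ Finset.Icc 1 N) →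
        (((M.inf' hMne c : ℕ) : ℤ) = (∑ i : Fin k, ((U i).card : ℤ)) - (k : ℤ) ↔
          ∃ a ∈ M, ∀ i, a i ∈ U i)) := by
  have key := c_formula k U c hc
  set S : ℤ := ∑ i : Fin k, ((U i).card : ℤ) with hS
  have hcard_le : ∀ a : Fin k → ℕ,
      ((Finset.univ.filter (fun i => a i ∈ U i)).card : ℤ) ≤ (k : ℤ) := by
    intro a
    have := Finset.card_filter_le (Finset.univ : Finset (Fin k)) (fun i => a i ∈ U i)
    simpa using Int.ofNat_le.mpr this
  have hfull : ∀ a : Fin k → ℕ,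
      ((Finset.univ.filter (fun i => a i ∈ U i)).card = k ↔ ∀ i, a i ∈ U i) := by
    intro a
    constructor
    · intro h i
      have : (Finset.univ.filter (fun i => a i ∈ U i)) = Finset.univ := by
        apply Finset.eq_univ_of_card
        simpa using h
      have hi : i ∈ Finset.univ.filter (fun i => a i ∈ U i) := by
        rw [this]; exact Finset.mem_univ i
      exact (Finset.mem_filter.mp hi).2
    · intro h
      have : (Finset.univ.filter (fun i => a i ∈ U i)) = Finset.univ :=
        Finset.filter_true_of_mem (fun i _ => h i)
      simp [this]
  constructor
  · intro a _; exact key a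
  · intro M hMne hMsub
    constructor
    · intro h
      obtain ⟨a, haM, ha⟩ := Finset.exists_mem_eq_inf' hMne c
      refine ⟨a, haM, ?_⟩
      rw [← hfull a]
      have : (c a : ℤ) = S - (k : ℤ) := by rw [ha] at h; exact h
      have h2 := key a
      omega
    · rintro ⟨a, haM, ha⟩
      have hca : (c a : ℤ) = S - (k : ℤ) := by
        rw [key a, (hfull a).mpr ha]
      have hle : ((M.inf' hMne c : ℕ) : ℤ) ≤ S - (k : ℤ) := by
        rw [← hca]
        exact_mod_cast Finset.inf'_le c haM
      have hge : S - (k : ℤ) ≤ ((M.inf' hMne c : ℕ) : ℤ) := by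
        obtain ⟨b, hbM, hb⟩ := Finset.exists_mem_eq_inf' hMne c
        rw [hb]
        have := key b
        have := hcard_le b
        omega
      omega
end

section
/- Let k ≥ 2 and N ≥ 1 be integers, let M ⊆ {1,…,N}^k, and let U_1, …, U_k ⊆ {1,…,N}. Consider the vertex set V = {s} ∪ ({1,…,N} × {1,…,k}), where s is a distinguished vertex not of the form (a, i). Let E be the collection of k-element subsets of V consisting of: (i) for each (a_1,…,a_k) ∈ M, the set {(a_1,1), (a_2,2), …, (a_k,k)}; and (ii) for each i ∈ {1,…,k} and each choice of elements a_t ∈ U_t for every t ∈ {1,…,k} ∖ {i}, the set {s} ∪ {(a_t, t) : t ∈ {1,…,k} ∖ {i}}. Then there exists a (k+1)-element set S ⊆ V with s ∈ S such that every k-element subset of S belongs to E, if and only if there exists (a_1,…,a_k) ∈ M with a_i ∈ U_i for every i ∈ {1,…,k}. -/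
/-- Correctness core of the reduction from OuMv_k to the Dynamic s-k-Uniform
(k+1)-Hyperclique problem. Vertices are `none` (the distinguished vertex `s`) and
`some (a, i)` for `a ∈ {1,…,N}`, `i ∈ {1,…,k}`. The hyperedge set `E` consists of
(i) `{(a₁,1),…,(a_k,k)}` for `a ∈ M`, and (ii) `{s} ∪ {(a_t,t) : t ≠ i}` for every
`i ∈ {1,…,k}` and every choice `a_t ∈ U t` (`t ≠ i`). Then `s` lies in a
(k+1)-hyperclique iff `M` meets `U 1 × ⋯ × U k`. -/
theorem hyperclique_core (k N : ℕ) (hk : 2 ≤ k) (hN : 1 ≤ N)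
    (M : Finset (Fin k → ℕ)) (hM : ∀ a ∈ M, ∀ i, a i ∈ Finset.Icc 1 N)
    (U : Fin k → Finset ℕ) (hU : ∀ i, U i ⊆ Finset.Icc 1 N)
    (E : Set (Finset (Option (ℕ × ℕ))))
    (hE : E = {e | ∃ a ∈ M,
          e = Finset.image (fun t : Fin k => some (a t, (t : ℕ) + 1)) Finset.univ} ∪
        {e | ∃ i : Fin k, ∃ a : Fin k → ℕ, (∀ t, t ≠ i → a t ∈ U t) ∧
          e = insert none
            ((Finset.univ.erase i).image (fun t : Fin k => some (a t, (t : ℕ) + 1)))}) :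
    (∃ S : Finset (Option (ℕ × ℕ)), S.card = k + 1 ∧ none ∈ S ∧
        (∀ v ∈ S, v = none ∨
          ∃ p : ℕ × ℕ, v = some p ∧ p.1 ∈ Finset.Icc 1 N ∧ p.2 ∈ Finset.Icc 1 k) ∧
        ∀ e : Finset (Option (ℕ × ℕ)), e ⊆ S → e.card = k → e ∈ E) ↔
      ∃ a ∈ M, ∀ i, a i ∈ U i := by
  have hinj : ∀ a : Fin k → ℕ,
      Function.Injective (fun t : Fin k => (some (a t, (t : ℕ) + 1) : Option (ℕ × ℕ))) := by
    intro a t t' h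
    simp only [Option.some.injEq, Prod.mk.injEq] at h
    exact Fin.ext (by omega)
  constructor
  · rintro ⟨S, hcard, hs, -, hedges⟩
    set T := S.erase none with hTdef
    have hTsub : T ⊆ S := Finset.erase_subset _ _
    have hTcard : T.card = k := by
      rw [hTdef, Finset.card_erase_of_mem hs, hcard]; omega
    have hTE := hedges T hTsub hTcard
    rw [hE] at hTE
    rcases hTE with ⟨a, haM, hTa⟩ | ⟨i', b, hb, hTb⟩
    · refine ⟨a, haM, fun i => ?_⟩
      haveI : Nontrivial (Fin k) := Fin.nontrivial_iff_two_le.mpr hk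
      obtain ⟨j, hj⟩ := exists_ne i
      have hvT : (some (a j, (j : ℕ) + 1) : Option (ℕ × ℕ)) ∈ T := by
        rw [hTa]; exact Finset.mem_image_of_mem _ (Finset.mem_univ j)
      set v : Option (ℕ × ℕ) := some (a j, (j : ℕ) + 1) with hvdef
      have hvS : v ∈ S := hTsub hvT
      have hecard : (S.erase v).card = k := by
        rw [Finset.card_erase_of_mem hvS, hcard]; omega
      have heE := hedges (S.erase v) (Finset.erase_subset _ _) hecard
      rw [hE] at heE
      have hnone : none ∈ S.erase v := Finset.mem_erase.mpr ⟨by simp [hvdef], hs⟩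
      rcases heE with ⟨c, -, hec⟩ | ⟨i'', b, hb, heb⟩
      · exfalso; rw [hec] at hnone; simp at hnone
      · have key : (Finset.univ.erase j).image
            (fun t : Fin k => (some (a t, (t : ℕ) + 1) : Option (ℕ × ℕ))) =
            (Finset.univ.erase i'').image
            (fun t : Fin k => (some (b t, (t : ℕ) + 1) : Option (ℕ × ℕ))) := by
          have h1 : (S.erase v).erase none = (S.erase none).erase v :=
            Finset.erase_right_comm
          have h2 : (S.erase v).erase none = (Finset.univ.erase i'').image
              (fun t : Fin k => (some (b t, (t : ℕ) + 1) : Option (ℕ × ℕ))) := by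
            rw [heb, Finset.erase_insert (by simp)]
          rw [Finset.image_erase (hinj a), ← hTa, hTdef, ← hvdef, ← h1, h2]
        have hmem : (some (a i, (i : ℕ) + 1) : Option (ℕ × ℕ)) ∈
            (Finset.univ.erase i'').image
            (fun t : Fin k => (some (b t, (t : ℕ) + 1) : Option (ℕ × ℕ))) := by
          rw [← key]
          exact Finset.mem_image_of_mem _ (Finset.mem_erase.mpr ⟨hj.symm, Finset.mem_univ i⟩)
        obtain ⟨t', ht', heq⟩ := Finset.mem_image.mp hmem
        simp only [Option.some.injEq, Prod.mk.injEq] at heq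
        have : t' = i := Fin.ext (by omega)
        subst this
        rw [← heq.1]
        exact hb t' (Finset.mem_erase.mp ht').1
    · exfalso
      have : (none : Option (ℕ × ℕ)) ∉ T := Finset.notMem_erase _ _
      rw [hTb] at this; simp at this
  · rintro ⟨a, haM, haU⟩
    set f : Fin k → Option (ℕ × ℕ) := fun t => some (a t, (t : ℕ) + 1) with hfdef
    set T : Finset (Option (ℕ × ℕ)) := Finset.univ.image f with hTdef
    have hnT : (none : Option (ℕ × ℕ)) ∉ T := by simp [hTdef, hfdef]
    have hTcard : T.card = k := by
      rw [hTdef, Finset.card_image_of_injective _ (hinj a)]; simp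
    refine ⟨insert none T, ?_, Finset.mem_insert_self _ _, ?_, ?_⟩
    · rw [Finset.card_insert_of_notMem hnT, hTcard]
    · intro v hv
      rcases Finset.mem_insert.mp hv with h | h
      · exact Or.inl h
      · obtain ⟨t, -, ht⟩ := Finset.mem_image.mp h
        refine Or.inr ⟨(a t, (t : ℕ) + 1), ht.symm, hM a haM t, ?_⟩
        simp only [Finset.mem_Icc]
        exact ⟨by omega, by omega⟩
    · intro e hsub hecard
      have hScard : (insert none T).card = k + 1 := by
        rw [Finset.card_insert_of_notMem hnT, hTcard]
      have hdiff : ((insert none T) \ e).card = 1 := by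
        rw [Finset.card_sdiff_of_subset hsub, hScard, hecard]; omega
      obtain ⟨v, hv⟩ := Finset.card_eq_one.mp hdiff
      have hvS : v ∈ insert none T := by
        have : v ∈ (insert none T) \ e := by rw [hv]; exact Finset.mem_singleton_self v
        exact (Finset.mem_sdiff.mp this).1
      have he : e = (insert none T).erase v := by
        ext x
        simp only [Finset.mem_erase]
        constructor
        · intro hx
          refine ⟨?_, hsub hx⟩
          intro hxy
          have hvm : v ∈ (insert none T) \ e := by rw [hv]; exact Finset.mem_singleton_self v
          exact (Finset.mem_sdiff.mp hvm).2 (hxy ▸ hx)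
        · rintro ⟨hxv, hxS⟩
          by_contra hxe
          have : x ∈ (insert none T) \ e := Finset.mem_sdiff.mpr ⟨hxS, hxe⟩
          rw [hv, Finset.mem_singleton] at this
          exact hxv this
      rw [hE]
      rcases Finset.mem_insert.mp hvS with rfl | hvT
      · left
        exact ⟨a, haM, by rw [he, Finset.erase_insert hnT]⟩
      · right
        obtain ⟨t₀, -, ht₀⟩ := Finset.mem_image.mp hvT
        refine ⟨t₀, a, fun t _ => haU t, ?_⟩
        rw [he, ← ht₀, Finset.erase_insert_of_ne (by simp [hfdef]), hTdef,
          ← Finset.image_erase (hinj a)]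
end

section
/- Let A, B, C be finite sets and let R_BA ⊆ B × A and R_AC ⊆ A × C be relations. Define a simple undirected graph G on the vertex set consisting of two distinguished vertices s and t together with five pairwise disjoint layers: a copy V_B of B (writing b^{V_B} for the copy of b ∈ B), copies U_B, U_D, U_C of A (writing a^{U_B}, a^{U_D}, a^{U_C} for the copies of a ∈ A), and a copy V_C of C (writing c^{V_C} for the copy of c ∈ C). The edges of G are: {s, b^{V_B}} for every b ∈ B; {c^{V_C}, t} for every c ∈ C; {b^{V_B}, a^{U_B}} exactly when (b,a) ∈ R_BA; {a^{U_C}, c^{V_C}} exactly when (a,c) ∈ R_AC; and {a^{U_B}, a^{U_D}} and {a^{U_D}, a^{U_C}} for every a ∈ A. Then for every vertex subset S containing s, t, and all vertices of U_B and U_C, the vertices s and t are connected in the subgraph of G induced by S if and only if there exist a ∈ A, b ∈ B, c ∈ C such that b^{V_B} ∈ S, a^{U_D} ∈ S, c^{V_C} ∈ S, (b,a) ∈ R_BA, and (a,c) ∈ R_AC. -/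
/-- The vertex set of the st-SubConn reduction graph: distinguished vertices `s`, `t`,
a layer `V_B` (copies of `B`), layers `U_B`, `U_D`, `U_C` (copies of `A`), and a layer
`V_C` (copies of `C`). -/
inductive SubConnVertex (A B C : Type*) where
  | s : SubConnVertex A B C
  | t : SubConnVertex A B C
  | vB : B → SubConnVertex A B C
  | uB : A → SubConnVertex A B C
  | uD : A → SubConnVertex A B C
  | uC : A → SubConnVertex A B C
  | vC : C → SubConnVertex A B C

/-- The (oriented) base edge relation of the st-SubConn reduction graph. -/
def subConnE0 {A B C : Type*} (RBA : B → A → Prop) (RAC : A → C → Prop) :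
    SubConnVertex A B C → SubConnVertex A B C → Prop
  | .s, .vB _ => True
  | .vC _, .t => True
  | .vB b, .uB a => RBA b a
  | .uC a, .vC c => RAC a c
  | .uB a, .uD a' => a = a'
  | .uD a, .uC a' => a = a'
  | _, _ => False

/-- The undirected st-SubConn reduction graph. -/
def subConnGraph {A B C : Type*} (RBA : B → A → Prop) (RAC : A → C → Prop) :
    SimpleGraph (SubConnVertex A B C) where
  Adj x y := x ≠ y ∧ (subConnE0 RBA RAC x y ∨ subConnE0 RBA RAC y x)
  symm := by
    constructor
    intro x y h
    exact ⟨h.1.symm, h.2.symm⟩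
  loopless := by
    constructor
    intro x h
    exact h.1 rfl


private def subConnGood {A B C : Type*} (RBA : B → A → Prop)
    (S : Set (SubConnVertex A B C)) : SubConnVertex A B C → Prop
  | .s => True
  | .vB _ => True
  | .uB a => ∃ b, SubConnVertex.vB b ∈ S ∧ RBA b a
  | .uD a => ∃ b, SubConnVertex.vB b ∈ S ∧ RBA b a
  | .uC a => SubConnVertex.uD a ∈ S ∧ ∃ b, SubConnVertex.vB b ∈ S ∧ RBA b a
  | .t => False
  | .vC _ => False

private lemma walk_pred {V : Type*} {G : SimpleGraph V} {P : V → Prop}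
    (h : ∀ x y, G.Adj x y → P x → P y) {u v : V} (w : G.Walk u v) (hu : P u) : P v := by
  induction w with
  | nil => exact hu
  | cons hadj _ ih => exact ih (h _ _ hadj hu)

/-- Structural correctness of the reduction from 4-Clique Detection to st-SubConn:
for any vertex subset `S` containing `s`, `t` and all of `U_B ∪ U_C`, the vertices
`s` and `t` are connected in the subgraph induced by `S` iff there are `a, b, c` with
`b^{V_B}, a^{U_D}, c^{V_C} ∈ S`, `(b,a) ∈ R_BA` and `(a,c) ∈ R_AC`. -/
theorem subConn_core {A B C : Type*} [Fintype A] [Fintype B] [Fintype C]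
    (RBA : B → A → Prop) (RAC : A → C → Prop)
    (S : Set (SubConnVertex A B C))
    (hs : SubConnVertex.s ∈ S) (ht : SubConnVertex.t ∈ S)
    (hUB : ∀ a : A, SubConnVertex.uB a ∈ S)
    (hUC : ∀ a : A, SubConnVertex.uC a ∈ S) :
    ((subConnGraph RBA RAC).induce S).Reachable
        ⟨SubConnVertex.s, hs⟩ ⟨SubConnVertex.t, ht⟩ ↔
      ∃ (a : A) (b : B) (c : C), SubConnVertex.vB b ∈ S ∧ SubConnVertex.uD a ∈ S ∧
        SubConnVertex.vC c ∈ S ∧ RBA b a ∧ RAC a c := by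
  constructor
  · intro h
    by_contra hP
    obtain ⟨w⟩ := h
    refine walk_pred (P := fun v : S => subConnGood RBA S v.1) ?_ w trivial
    rintro ⟨x, hx⟩ ⟨y, hy⟩ hadj hgx
    have hadj' : (subConnGraph RBA RAC).Adj x y := hadj
    obtain ⟨-, h1 | h1⟩ := hadj' <;>
        cases x <;> cases y <;>
        simp only [subConnE0, subConnGood] at h1 hgx ⊢ <;>
        try exact h1.elim
    all_goals first
      | trivial
      | exact hgx
      | exact ⟨_, hx, h1⟩
      | (subst h1; first | exact hgx | exact ⟨hx, hgx⟩ | exact hgx.2)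
      | (obtain ⟨hd, b, hb, hba⟩ := hgx; exact hP ⟨_, b, _, hb, hd, hy, hba, h1⟩)
  · rintro ⟨a, b, c, hb, hd, hc, h1, h2⟩
    have e1 : (subConnGraph RBA RAC).Adj .s (.vB b) := ⟨by simp, Or.inl trivial⟩
    have e2 : (subConnGraph RBA RAC).Adj (.vB b) (.uB a) := ⟨by simp, Or.inl h1⟩
    have e3 : (subConnGraph RBA RAC).Adj (.uB a) (.uD a) := ⟨by simp, Or.inl rfl⟩
    have e4 : (subConnGraph RBA RAC).Adj (.uD a) (.uC a) := ⟨by simp, Or.inl rfl⟩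
    have e5 : (subConnGraph RBA RAC).Adj (.uC a) (.vC c) := ⟨by simp, Or.inl h2⟩
    have e6 : (subConnGraph RBA RAC).Adj (.vC c) .t := ⟨by simp, Or.inl trivial⟩
    have r : ∀ (x y : S), (subConnGraph RBA RAC).Adj x.1 y.1 →
        ((subConnGraph RBA RAC).induce S).Reachable x y := fun x y h =>
      (SimpleGraph.Adj.reachable (by exact h))
    exact (((((r ⟨_, hs⟩ ⟨_, hb⟩ e1).trans (r ⟨_, hb⟩ ⟨_, hUB a⟩ e2)).trans
      (r ⟨_, hUB a⟩ ⟨_, hd⟩ e3)).trans (r ⟨_, hd⟩ ⟨_, hUC a⟩ e4)).trans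
      (r ⟨_, hUC a⟩ ⟨_, hc⟩ e5)).trans (r ⟨_, hc⟩ ⟨_, ht⟩ e6)
end

section
/- Let d ≥ 1, B ≥ 1 and N ≥ 1 be integers. For each a ∈ {1,…,N}^d let S_a : ℤ^d → ℤ be a function such that S_a(x) = 0 whenever some coordinate x_i satisfies x_i < 1 or x_i > B, and define A_a : ℤ^d → ℤ by A_a(y) = Σ_{b ∈ {0,1}^d} (−1)^{b_1 + ⋯ + b_d} · S_a(y − b). Define T : ℤ^d → ℤ by T((B+1)·(a − 𝟙) + y) = A_a(y) for every a ∈ {1,…,N}^d and every y with 1 ≤ y_i ≤ B+1 for all i (where 𝟙 = (1,…,1) and this decomposition of an index is unique), and T(x) = 0 for all x not of this form. Then for every a ∈ {1,…,N}^d and every y with 1 ≤ y_i ≤ B+1 for all i: Σ_{x ∈ ℤ^d, 1 ≤ x_i ≤ (B+1)(a_i − 1) + y_i for all i} T(x) = S_a(y). -/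
/-- The d-dimensional finite difference of `S : ℤ^d → ℤ`:
`A y = Σ_{b ∈ {0,1}^d} (−1)^{b₁+⋯+b_d} S(y − b)`, with `b` encoded as the subset
`s ⊆ {1,…,d}` of its nonzero coordinates. -/
def finDiff {d : ℕ} (S : (Fin d → ℤ) → ℤ) (y : Fin d → ℤ) : ℤ :=
  ∑ s : Finset (Fin d), (-1 : ℤ) ^ s.card * S (fun i => y i - if i ∈ s then 1 else 0)

lemma prod_ite_split {α : Type*} [Fintype α] [DecidableEq α] (t : Finset α) (f g : α → ℤ) :
    ∏ i, (if i ∈ t then f i else g i) = (∏ i ∈ t, f i) * ∏ i ∈ tᶜ, g i := by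
  rw [← Finset.prod_mul_prod_compl t]
  congr 1
  · exact Finset.prod_congr rfl (fun i hi => by simp [hi])
  · exact Finset.prod_congr rfl (fun i hi => by simp [Finset.mem_compl.mp hi])

lemma expand_prod {α : Type*} [Fintype α] [DecidableEq α] (f g : α → ℤ) :
    ∑ t : Finset α, ∏ i, (if i ∈ t then f i else g i) = ∏ i, (f i + g i) := by
  rw [Finset.prod_add, ← Finset.powerset_univ]
  apply Finset.sum_congr rfl
  intro t _
  rw [prod_ite_split]
  congr 1

lemma telescope {d : ℕ} (G : (Fin d → ℤ) → ℤ) (M : Fin d → ℤ) (hM : ∀ i, 1 ≤ M i) :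
    ∑ x ∈ Fintype.piFinset (fun i => Finset.Icc (1:ℤ) (M i)), finDiff G x
      = ∑ s : Finset (Fin d), (-1:ℤ)^s.card * G (fun i => if i ∈ s then 0 else M i) := by
  classical
  set D := Fintype.piFinset (fun i => Finset.Icc (0:ℤ) (M i)) with hD
  have stepA : ∀ s : Finset (Fin d),
      (∑ x ∈ Fintype.piFinset (fun i => Finset.Icc (1:ℤ) (M i)),
        G (fun i => x i - if i ∈ s then 1 else 0))
      = ∑ x ∈ D, (if ∀ i, (if i ∈ s then x i ≠ M i else x i ≠ 0) then G x else 0) := by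
    intro s
    rw [Finset.sum_ite, Finset.sum_const_zero, add_zero]
    refine Finset.sum_nbij' (i := fun x j => x j - if j ∈ s then 1 else 0)
      (j := fun x j => x j + if j ∈ s then 1 else 0) ?_ ?_ ?_ ?_ ?_
    · intro x hx
      rw [Fintype.mem_piFinset] at hx
      rw [Finset.mem_filter]
      constructor
      · rw [hD, Fintype.mem_piFinset]
        intro i
        have h := hx i
        rw [Finset.mem_Icc] at h ⊢
        by_cases hi : i ∈ s <;> simp [hi] <;> omega
      · intro i
        have h := hx i
        rw [Finset.mem_Icc] at h
        by_cases hi : i ∈ s <;> simp [hi] <;> omega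
    · intro x hx
      rw [Finset.mem_filter, hD, Fintype.mem_piFinset] at hx
      rw [Fintype.mem_piFinset]
      intro i
      have h1 := hx.1 i
      have h2 := hx.2 i
      rw [Finset.mem_Icc] at h1 ⊢
      by_cases hi : i ∈ s <;> simp [hi] at h2 ⊢ <;> omega
    · intro x _
      funext j
      simp
    · intro x _
      funext j
      simp
    · intro x _
      rfl
  have LHS1 : ∑ x ∈ Fintype.piFinset (fun i => Finset.Icc (1:ℤ) (M i)), finDiff G x
      = ∑ x ∈ D, ∑ s : Finset (Fin d),
          (-1:ℤ)^s.card * (if ∀ i, (if i ∈ s then x i ≠ M i else x i ≠ 0) then G x else 0) := by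
    unfold finDiff
    rw [Finset.sum_comm]
    rw [Finset.sum_comm (s := D)]
    apply Finset.sum_congr rfl
    intro s _
    rw [← Finset.mul_sum, ← Finset.mul_sum, stepA s]
  have inner : ∀ x : Fin d → ℤ,
      (∑ s : Finset (Fin d),
        (-1:ℤ)^s.card * (if ∀ i, (if i ∈ s then x i ≠ M i else x i ≠ 0) then G x else 0))
      = G x * ∏ i, ((if x i ≠ 0 then (1:ℤ) else 0) - (if x i ≠ M i then 1 else 0)) := by
    intro x
    have h1 : ∀ s : Finset (Fin d),
        (-1:ℤ)^s.card * (if ∀ i, (if i ∈ s then x i ≠ M i else x i ≠ 0) then G x else 0)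
        = G x * ∏ i, (if i ∈ s then -(if x i ≠ M i then (1:ℤ) else 0)
            else (if x i ≠ 0 then 1 else 0)) := by
      intro s
      by_cases hQ : ∀ i, (if i ∈ s then x i ≠ M i else x i ≠ 0)
      · rw [if_pos hQ]
        have hfac : ∀ i : Fin d, (if i ∈ s then -(if x i ≠ M i then (1:ℤ) else 0)
            else (if x i ≠ 0 then 1 else 0)) = (if i ∈ s then (-1:ℤ) else 1) := by
          intro i
          have hq := hQ i
          by_cases hi : i ∈ s <;> simp [hi] at hq ⊢ <;> simp [hq]
        calc (-1:ℤ)^s.card * G x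
            = G x * ∏ i, (if i ∈ s then (-1:ℤ) else 1) := by
              rw [prod_ite_split]
              simp [mul_comm]
          _ = G x * ∏ i, (if i ∈ s then -(if x i ≠ M i then (1:ℤ) else 0)
              else (if x i ≠ 0 then 1 else 0)) := by
              congr 1
              exact (Finset.prod_congr rfl (fun i _ => hfac i)).symm
      · rw [if_neg hQ]
        push_neg at hQ
        obtain ⟨i, hi⟩ := hQ
        have hfac : (if i ∈ s then -(if x i ≠ M i then (1:ℤ) else 0)
            else (if x i ≠ 0 then 1 else 0)) = 0 := by
          by_cases his : i ∈ s <;> simp [his] at hi ⊢ <;> simp [hi]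
        rw [Finset.prod_eq_zero (Finset.mem_univ i) hfac]
        ring
    calc (∑ s : Finset (Fin d),
          (-1:ℤ)^s.card * (if ∀ i, (if i ∈ s then x i ≠ M i else x i ≠ 0) then G x else 0))
        = ∑ s : Finset (Fin d), G x * ∏ i, (if i ∈ s then -(if x i ≠ M i then (1:ℤ) else 0)
            else (if x i ≠ 0 then 1 else 0)) := Finset.sum_congr rfl (fun s _ => h1 s)
      _ = G x * ∑ s : Finset (Fin d), ∏ i, (if i ∈ s then -(if x i ≠ M i then (1:ℤ) else 0)
            else (if x i ≠ 0 then 1 else 0)) := by rw [← Finset.mul_sum]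
      _ = G x * ∏ i, (-(if x i ≠ M i then (1:ℤ) else 0) + (if x i ≠ 0 then 1 else 0)) := by
            rw [expand_prod]
      _ = G x * ∏ i, ((if x i ≠ 0 then (1:ℤ) else 0) - (if x i ≠ M i then 1 else 0)) := by
            congr 1
            exact Finset.prod_congr rfl (fun i _ => by ring)
  set C := Fintype.piFinset (fun i => ({0, M i} : Finset ℤ)) with hC
  have hCD : C ⊆ D := by
    clear LHS1
    intro x hx
    rw [hC, Fintype.mem_piFinset] at hx
    rw [hD, Fintype.mem_piFinset]
    intro i
    have h := hx i
    have := hM i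
    simp only [Finset.mem_insert, Finset.mem_singleton] at h
    rw [Finset.mem_Icc]
    rcases h with h | h <;> omega
  have stepC : (∑ x ∈ D, G x * ∏ i, ((if x i ≠ 0 then (1:ℤ) else 0) - (if x i ≠ M i then 1 else 0)))
      = ∑ x ∈ C, G x * ∏ i, ((if x i ≠ 0 then (1:ℤ) else 0) - (if x i ≠ M i then 1 else 0)) := by
    clear LHS1
    refine (Finset.sum_subset hCD ?_).symm
    intro x _ hx
    rw [hC, Fintype.mem_piFinset] at hx
    push_neg at hx
    obtain ⟨i, hi⟩ := hx
    simp only [Finset.mem_insert, Finset.mem_singleton] at hi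
    push_neg at hi
    have : ((if x i ≠ 0 then (1:ℤ) else 0) - (if x i ≠ M i then 1 else 0)) = 0 := by
      simp [hi.1, hi.2]
    rw [Finset.prod_eq_zero (Finset.mem_univ i) this, mul_zero]
  have stepD : (∑ x ∈ C, G x * ∏ i, ((if x i ≠ 0 then (1:ℤ) else 0) - (if x i ≠ M i then 1 else 0)))
      = ∑ s : Finset (Fin d), (-1:ℤ)^s.card * G (fun i => if i ∈ s then 0 else M i) := by
    clear LHS1 stepC
    refine (Finset.sum_nbij' (i := fun s : Finset (Fin d) => fun j => if j ∈ s then (0:ℤ) else M j)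
      (j := fun x : Fin d → ℤ => Finset.univ.filter (fun j => x j = 0)) ?_ ?_ ?_ ?_ ?_).symm
    · intro s _
      rw [hC, Fintype.mem_piFinset]
      intro i
      by_cases hi : i ∈ s <;> simp [hi]
    · intro x _
      exact Finset.mem_univ _
    · intro s _
      ext i
      simp only [Finset.mem_filter, Finset.mem_univ, true_and]
      have := hM i
      by_cases hi : i ∈ s <;> simp [hi] <;> omega
    · intro x hx
      rw [hC, Fintype.mem_piFinset] at hx
      funext i
      have h := hx i
      simp only [Finset.mem_insert, Finset.mem_singleton] at h
      by_cases h0 : x i = 0 <;> simp [h0]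
      tauto
    · intro s _
      have e4 : ∀ i : Fin d, ((if (if i ∈ s then (0:ℤ) else M i) ≠ 0 then (1:ℤ) else 0)
          - (if (if i ∈ s then (0:ℤ) else M i) ≠ M i then 1 else 0))
          = (if i ∈ s then (-1:ℤ) else 1) := by
        intro i
        have := hM i
        by_cases hi : i ∈ s <;> simp [hi] <;> omega
      have ew : (∏ i, ((if (if i ∈ s then (0:ℤ) else M i) ≠ 0 then (1:ℤ) else 0)
          - (if (if i ∈ s then (0:ℤ) else M i) ≠ M i then 1 else 0)))
          = (-1:ℤ)^s.card := by
        rw [Finset.prod_congr rfl (fun i _ => e4 i), prod_ite_split]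
        simp
      rw [ew]
      ring
  calc ∑ x ∈ Fintype.piFinset (fun i => Finset.Icc (1:ℤ) (M i)), finDiff G x
      = ∑ x ∈ D, ∑ s : Finset (Fin d),
          (-1:ℤ)^s.card * (if ∀ i, (if i ∈ s then x i ≠ M i else x i ≠ 0) then G x else 0) := LHS1
    _ = ∑ x ∈ D, G x * ∏ i, ((if x i ≠ 0 then (1:ℤ) else 0) - (if x i ≠ M i then 1 else 0)) :=
        Finset.sum_congr rfl (fun x _ => inner x)
    _ = ∑ x ∈ C, G x * ∏ i, ((if x i ≠ 0 then (1:ℤ) else 0) - (if x i ≠ M i then 1 else 0)) := stepC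
    _ = ∑ s : Finset (Fin d), (-1:ℤ)^s.card * G (fun i => if i ∈ s then 0 else M i) := stepD


def blk (B : ℕ) (x : ℤ) : ℤ := (x - 1) / ((B:ℤ)+1) + 1
def off (B : ℕ) (x : ℤ) : ℤ := (x - 1) % ((B:ℤ)+1) + 1

lemma blk_off_eq (B : ℕ) (x : ℤ) : ((B:ℤ)+1) * (blk B x - 1) + off B x = x := by
  have h := Int.mul_ediv_add_emod (x-1) ((B:ℤ)+1)
  simp only [blk, off]
  ring_nf
  ring_nf at h
  linarith

lemma off_bounds (B : ℕ) (x : ℤ) : 1 ≤ off B x ∧ off B x ≤ (B:ℤ)+1 := by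
  have h1 : (0:ℤ) < (B:ℤ)+1 := by positivity
  have h2 := Int.emod_nonneg (x-1) (ne_of_gt h1)
  have h3 := Int.emod_lt_of_pos (x-1) h1
  unfold off; omega

lemma blk_spec (B : ℕ) (a y : ℤ) (hy1 : 1 ≤ y) (hy2 : y ≤ (B:ℤ)+1) :
    blk B (((B:ℤ)+1)*(a-1)+y) = a := by
  have h1 : (0:ℤ) < (B:ℤ)+1 := by positivity
  have e : ((B:ℤ)+1)*(a-1)+y - 1 = (y-1) + ((B:ℤ)+1) * (a-1) := by ring
  unfold blk
  rw [e, Int.add_mul_ediv_left _ _ (ne_of_gt h1), Int.ediv_eq_zero_of_lt (by linarith) (by linarith)]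
  ring

lemma off_spec (B : ℕ) (a y : ℤ) (hy1 : 1 ≤ y) (hy2 : y ≤ (B:ℤ)+1) :
    off B (((B:ℤ)+1)*(a-1)+y) = y := by
  have h := blk_off_eq B (((B:ℤ)+1)*(a-1)+y)
  rw [blk_spec B a y hy1 hy2] at h
  linarith

lemma blk_zero (B : ℕ) : blk B 0 = 0 := by
  have h := blk_spec B 0 ((B:ℤ)+1) (by omega) le_rfl
  rw [show ((B:ℤ)+1)*((0:ℤ)-1)+((B:ℤ)+1) = 0 by ring] at h
  exact h

lemma sub_one_of_off_one (B : ℕ) (x : ℤ) (h : off B x = 1) :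
    blk B (x - 1) = blk B x - 1 ∧ off B (x - 1) = (B:ℤ)+1 := by
  have e := blk_off_eq B x
  rw [h] at e
  have e2 : x - 1 = ((B:ℤ)+1)*((blk B x - 1) - 1) + ((B:ℤ)+1) := by linear_combination -e
  rw [e2]
  exact ⟨blk_spec B _ _ (by omega) le_rfl, off_spec B _ _ (by omega) le_rfl⟩

lemma sub_one_of_off_ge_two (B : ℕ) (x : ℤ) (h : 2 ≤ off B x) :
    blk B (x - 1) = blk B x ∧ off B (x - 1) = off B x - 1 := by
  have e := blk_off_eq B x
  have hb := off_bounds B x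
  have e2 : x - 1 = ((B:ℤ)+1)*(blk B x - 1) + (off B x - 1) := by linear_combination -e
  rw [e2]
  exact ⟨blk_spec B _ _ (by omega) (by omega), off_spec B _ _ (by omega) (by omega)⟩


/-- Block-assembly prefix-sum identity for the reduction from OuMv_k to the
(k−1)-Dimensional Langerman's problem: the tensor `T` assembled from the finite
differences `A_a = finDiff (S a)` in blocks of side `B+1` indexed by
`a ∈ {1,…,N}^d` satisfies: the d-dimensional prefix sum of `T` at the position
`(B+1)·(a − 𝟙) + y` equals `S a y`. -/
theorem langerman_block_prefix_sum (d B N : ℕ) (hd : 1 ≤ d) (hB : 1 ≤ B) (hN : 1 ≤ N)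
    (S : (Fin d → ℤ) → (Fin d → ℤ) → ℤ)
    (hS : ∀ a : Fin d → ℤ, (∀ i, 1 ≤ a i ∧ a i ≤ (N : ℤ)) →
      ∀ x : Fin d → ℤ, (∃ i, x i < 1 ∨ (B : ℤ) < x i) → S a x = 0)
    (T : (Fin d → ℤ) → ℤ)
    (hT1 : ∀ a y : Fin d → ℤ, (∀ i, 1 ≤ a i ∧ a i ≤ (N : ℤ)) →
      (∀ i, 1 ≤ y i ∧ y i ≤ (B : ℤ) + 1) →
      T (fun i => ((B : ℤ) + 1) * (a i - 1) + y i) = finDiff (S a) y)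
    (hT2 : ∀ x : Fin d → ℤ,
      (¬ ∃ a y : Fin d → ℤ, (∀ i, 1 ≤ a i ∧ a i ≤ (N : ℤ)) ∧
        (∀ i, 1 ≤ y i ∧ y i ≤ (B : ℤ) + 1) ∧
        x = fun i => ((B : ℤ) + 1) * (a i - 1) + y i) → T x = 0) :
    ∀ a y : Fin d → ℤ, (∀ i, 1 ≤ a i ∧ a i ≤ (N : ℤ)) →
      (∀ i, 1 ≤ y i ∧ y i ≤ (B : ℤ) + 1) →
      ∑ x ∈ Fintype.piFinset
          (fun i => Finset.Icc (1 : ℤ) (((B : ℤ) + 1) * (a i - 1) + y i)), T x =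
        S a y := by
  classical
  intro a y ha hy
  set G : (Fin d → ℤ) → ℤ := fun x =>
    if (∀ i, 1 ≤ blk B (x i) ∧ blk B (x i) ≤ (N:ℤ))
    then S (fun i => blk B (x i)) (fun i => off B (x i)) else 0 with hG
  have hGpos : ∀ x : Fin d → ℤ, (∀ i, 1 ≤ blk B (x i) ∧ blk B (x i) ≤ (N:ℤ)) →
      G x = S (fun i => blk B (x i)) (fun i => off B (x i)) := by
    intro x h
    simp only [hG]
    exact if_pos h
  have hGneg : ∀ x : Fin d → ℤ, (¬ ∀ i, 1 ≤ blk B (x i) ∧ blk B (x i) ≤ (N:ℤ)) →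
      G x = 0 := by
    intro x h
    simp only [hG]
    exact if_neg h
  -- per-term comparison inside a valid block
  have hGterm : ∀ (x : Fin d → ℤ) (s : Finset (Fin d)),
      (∀ i, 1 ≤ blk B (x i) ∧ blk B (x i) ≤ (N:ℤ)) →
      G (fun i => x i - if i ∈ s then 1 else 0)
        = S (fun i => blk B (x i)) (fun i => off B (x i) - if i ∈ s then 1 else 0) := by
    intro x s hc
    by_cases hcross : ∃ j ∈ s, off B (x j) = 1
    · obtain ⟨j, hjs, hj1⟩ := hcross
      have hR : S (fun i => blk B (x i)) (fun i => off B (x i) - if i ∈ s then 1 else 0) = 0 :=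
        hS _ hc _ ⟨j, Or.inl (by rw [if_pos hjs]; omega)⟩
      rw [hR]
      by_cases hc' : ∀ i, 1 ≤ blk B (x i - if i ∈ s then 1 else 0)
          ∧ blk B (x i - if i ∈ s then 1 else 0) ≤ (N:ℤ)
      · rw [hGpos _ hc']
        apply hS _ hc'
        refine ⟨j, Or.inr ?_⟩
        show (B:ℤ) < off B (x j - if j ∈ s then 1 else 0)
        rw [if_pos hjs, (sub_one_of_off_one B (x j) hj1).2]
        omega
      · exact hGneg _ hc'
    · push_neg at hcross
      have hdec : ∀ i, blk B (x i - if i ∈ s then 1 else 0) = blk B (x i)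
          ∧ off B (x i - if i ∈ s then 1 else 0) = off B (x i) - if i ∈ s then 1 else 0 := by
        intro i
        by_cases hi : i ∈ s
        · have h2 : 2 ≤ off B (x i) := by
            have hb := off_bounds B (x i)
            have hne := hcross i hi
            omega
          simp only [if_pos hi]
          exact sub_one_of_off_ge_two B (x i) h2
        · simp [hi]
      have hc2 : ∀ i, 1 ≤ blk B (x i - if i ∈ s then 1 else 0)
          ∧ blk B (x i - if i ∈ s then 1 else 0) ≤ (N:ℤ) := by
        intro i
        rw [(hdec i).1]
        exact hc i
      rw [hGpos _ hc2]
      congr 1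
      · funext i
        exact (hdec i).1
      · funext i
        exact (hdec i).2
  -- T agrees with the finite difference of G everywhere
  have hTG : ∀ x : Fin d → ℤ, T x = finDiff G x := by
    intro x
    by_cases hc : ∀ i, 1 ≤ blk B (x i) ∧ blk B (x i) ≤ (N:ℤ)
    · have hz : ∀ i, 1 ≤ off B (x i) ∧ off B (x i) ≤ (B:ℤ)+1 := fun i => off_bounds B (x i)
      have hT : T x = finDiff (S (fun i => blk B (x i))) (fun i => off B (x i)) := by
        have hx : x = fun i => ((B:ℤ)+1) * (blk B (x i) - 1) + off B (x i) :=
          funext fun i => (blk_off_eq B (x i)).symm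
        conv_lhs => rw [hx]
        exact hT1 _ _ hc hz
      rw [hT]
      unfold finDiff
      apply Finset.sum_congr rfl
      intro s _
      rw [hGterm x s hc]
    · have hj' := not_forall.mp hc
      obtain ⟨j, hj⟩ := hj'
      have hT0 : T x = 0 := by
        apply hT2
        rintro ⟨a', y', ha', hy', hxe⟩
        have hxj : x j = ((B:ℤ)+1)*(a' j - 1) + y' j := by rw [hxe]
        have hbj : blk B (x j) = a' j := by
          rw [hxj]
          exact blk_spec B (a' j) (y' j) (hy' j).1 (hy' j).2
        apply hj
        rw [hbj]
        exact ha' j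
      rw [hT0]
      symm
      unfold finDiff
      apply Finset.sum_eq_zero
      intro s _
      have hGz : G (fun i => x i - if i ∈ s then 1 else 0) = 0 := by
        by_cases hc' : ∀ i, 1 ≤ blk B (x i - if i ∈ s then 1 else 0)
            ∧ blk B (x i - if i ∈ s then 1 else 0) ≤ (N:ℤ)
        · rw [hGpos _ hc']
          apply hS _ hc'
          by_cases hjs : j ∈ s
          · by_cases hj1 : off B (x j) = 1
            · refine ⟨j, Or.inr ?_⟩
              show (B:ℤ) < off B (x j - if j ∈ s then 1 else 0)
              rw [if_pos hjs, (sub_one_of_off_one B (x j) hj1).2]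
              omega
            · exfalso
              have h2 : 2 ≤ off B (x j) := by
                have hb := off_bounds B (x j)
                omega
              have heq := (sub_one_of_off_ge_two B (x j) h2).1
              have hcj := hc' j
              rw [if_pos hjs, heq] at hcj
              exact hj hcj
          · exfalso
            have hcj := hc' j
            rw [if_neg hjs, sub_zero] at hcj
            exact hj hcj
        · exact hGneg _ hc'
      rw [hGz, mul_zero]
  have hM : ∀ i, 1 ≤ ((B:ℤ)+1) * (a i - 1) + y i := by
    intro i
    have h1 := (ha i).1
    have h2 := (hy i).1
    have h3 : 0 ≤ ((B:ℤ)+1) * (a i - 1) :=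
      mul_nonneg (by positivity) (by linarith)
    linarith
  calc ∑ x ∈ Fintype.piFinset
          (fun i => Finset.Icc (1 : ℤ) (((B : ℤ) + 1) * (a i - 1) + y i)), T x
      = ∑ x ∈ Fintype.piFinset
          (fun i => Finset.Icc (1 : ℤ) (((B : ℤ) + 1) * (a i - 1) + y i)), finDiff G x :=
        Finset.sum_congr rfl (fun x _ => hTG x)
    _ = ∑ s : Finset (Fin d), (-1:ℤ)^s.card
          * G (fun i => if i ∈ s then 0 else ((B:ℤ)+1) * (a i - 1) + y i) :=
        telescope G _ hM
    _ = S a y := by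
        rw [Finset.sum_eq_single (∅ : Finset (Fin d))]
        · have hcM : ∀ i, 1 ≤ blk B ((fun i => if i ∈ (∅ : Finset (Fin d)) then 0
              else ((B:ℤ)+1) * (a i - 1) + y i) i)
              ∧ blk B ((fun i => if i ∈ (∅ : Finset (Fin d)) then 0
              else ((B:ℤ)+1) * (a i - 1) + y i) i) ≤ (N:ℤ) := by
            intro i
            simp only [Finset.notMem_empty, if_false]
            rw [blk_spec B (a i) (y i) (hy i).1 (hy i).2]
            exact ha i
          rw [hGpos _ hcM]
          simp only [Finset.card_empty, pow_zero, one_mul, Finset.notMem_empty, if_false]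
          congr 1
          · funext i
            exact blk_spec B (a i) (y i) (hy i).1 (hy i).2
          · funext i
            exact off_spec B (a i) (y i) (hy i).1 (hy i).2
        · intro s _ hs
          obtain ⟨j, hjs⟩ := Finset.nonempty_iff_ne_empty.mpr hs
          have : G (fun i => if i ∈ s then 0 else ((B:ℤ)+1) * (a i - 1) + y i) = 0 := by
            apply hGneg
            intro hall
            have hj := hall j
            rw [if_pos hjs, blk_zero B] at hj
            omega
          rw [this, mul_zero]
        · intro h
          exact absurd (Finset.mem_univ _) h
end

section
/- Let d ≥ 1 and let P be a finite set of points in ℝ^d. Suppose p ∈ P has all coordinates strictly positive and p is not dominated by any other point of P, i.e., for every q ∈ P with q ≠ p there exists i with q_i < p_i. For q ∈ ℝ^d let D(q) = {x ∈ ℝ^d : 0 ≤ x_i ≤ q_i for every i}. Then the d-dimensional Lebesgue measure of ⋃_{q ∈ P} D(q) is strictly greater than the d-dimensional Lebesgue measure of ⋃_{q ∈ P ∖ {p}} D(q). -/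
open MeasureTheory Set

/-- Removing an undominated point `p` (with strictly positive coordinates) from a
finite point set `P ⊆ ℝ^d` strictly decreases the Lebesgue measure of the union of
the dominated boxes `D(q) = {x : 0 ≤ xᵢ ≤ qᵢ ∀i}`. -/
theorem klee_strict_decrease (d : ℕ) (hd : 1 ≤ d)
    (P : Finset (Fin d → ℝ)) (p : Fin d → ℝ) (hp : p ∈ P)
    (hpos : ∀ i, 0 < p i)
    (hmax : ∀ q ∈ P, q ≠ p → ∃ i, q i < p i) :
    MeasureTheory.volume
        (⋃ q ∈ P.erase p, {x : Fin d → ℝ | ∀ i, 0 ≤ x i ∧ x i ≤ q i}) <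
      MeasureTheory.volume
        (⋃ q ∈ P, {x : Fin d → ℝ | ∀ i, 0 ≤ x i ∧ x i ≤ q i}) := by
  classical
  set D : (Fin d → ℝ) → Set (Fin d → ℝ) := fun q => {x | ∀ i, 0 ≤ x i ∧ x i ≤ q i} with hD
  have hmax' : ∀ q ∈ P.erase p, ∃ i, q i < p i := fun q hq =>
    hmax q (Finset.mem_of_mem_erase hq) (Finset.ne_of_mem_erase hq)
  set g : (Fin d → ℝ) → ℝ := fun q =>
    if h : ∃ i, q i < p i then p h.choose - q h.choose else 1 with hgdef
  have hg : ∀ q ∈ P.erase p, ∃ i, q i < p i ∧ g q = p i - q i := by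
    intro q hq
    have h := hmax' q hq
    exact ⟨h.choose, h.choose_spec, by simp only [hgdef, dif_pos h]⟩
  set S : Finset ℝ := (Finset.univ.image p) ∪ ((P.erase p).image g) with hS
  have hSne : S.Nonempty := ⟨p ⟨0, hd⟩, by simp [hS]⟩
  set ε := S.min' hSne with hε
  have hεle : ∀ a ∈ S, ε ≤ a := fun a ha => Finset.min'_le S a ha
  have hεpos : 0 < ε := by
    have hm := S.min'_mem hSne
    rw [← hε] at hm
    rw [hS] at hm
    rcases Finset.mem_union.1 hm with h | h
    · rcases Finset.mem_image.1 h with ⟨i, _, hi⟩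
      rw [← hi]; exact hpos i
    · rcases Finset.mem_image.1 h with ⟨q, hq, hq'⟩
      rcases hg q hq with ⟨i, hlt, hgq⟩
      rw [← hq', hgq]; linarith
  have hεp : ∀ i, ε ≤ p i := fun i => hεle _ (by simp [hS])
  have hεg : ∀ q ∈ P.erase p, ε ≤ g q := fun q hq =>
    hεle _ (by rw [hS]; exact Finset.mem_union_right _ (Finset.mem_image_of_mem g hq))
  set B : Set (Fin d → ℝ) := Set.pi Set.univ fun i => Set.Ioc (p i - ε) (p i) with hB
  have hBmeas : MeasurableSet B := MeasurableSet.univ_pi fun i => measurableSet_Ioc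
  have hBsub : B ⊆ D p := by
    intro x hx i
    have := hx i (mem_univ i)
    have := hεp i
    constructor <;> [linarith [this, (hx i (mem_univ i)).1]; exact (hx i (mem_univ i)).2]
  have hBdisj : Disjoint (⋃ q ∈ P.erase p, D q) B := by
    rw [Set.disjoint_left]
    rintro x hx hxB
    rcases Set.mem_iUnion₂.1 hx with ⟨q, hq, hxq⟩
    rcases hg q hq with ⟨i, hlt, hgq⟩
    have h1 : x i ≤ q i := (hxq i).2
    have h2 : p i - ε < x i := (hxB i (mem_univ i)).1
    have h3 : ε ≤ p i - q i := by rw [← hgq]; exact hεg q hq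
    linarith
  have hBvol : volume B = (ENNReal.ofReal ε) ^ d := by
    rw [hB, volume_pi_pi]
    simp [Real.volume_Ioc]
  have hBvol_ne : volume B ≠ 0 := by
    rw [hBvol]
    exact pow_ne_zero _ (by simpa using hεpos)
  -- U' has finite measure
  have hDbox : ∀ q : Fin d → ℝ, D q = Set.pi Set.univ fun i => Set.Icc 0 (q i) := by
    intro q; ext x; simp [hD, Set.mem_pi, Pi.le_def, forall_and]
  have hfin : volume (⋃ q ∈ P.erase p, D q) ≠ ⊤ := by
    have hle : volume (⋃ q ∈ P.erase p, D q) ≤ ∑ q ∈ P.erase p, volume (D q) :=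
      measure_biUnion_finset_le _ _
    refine ne_top_of_le_ne_top ?_ hle
    refine (ENNReal.sum_lt_top.2 fun q _ => ?_).ne
    rw [hDbox q, volume_pi_pi]
    simp only [Real.volume_Icc]
    exact ENNReal.prod_lt_top fun i _ => ENNReal.ofReal_lt_top
  -- union splits
  have hUsub : (⋃ q ∈ P.erase p, D q) ∪ B ⊆ ⋃ q ∈ P, D q := by
    apply Set.union_subset
    · exact Set.biUnion_subset_biUnion_left (fun q hq => Finset.mem_of_mem_erase hq)
    · exact hBsub.trans (Set.subset_biUnion_of_mem hp)
  have hkey : volume (⋃ q ∈ P.erase p, D q) + volume B ≤ volume (⋃ q ∈ P, D q) := by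
    rw [← measure_union hBdisj hBmeas]
    exact measure_mono hUsub
  calc volume (⋃ q ∈ P.erase p, D q)
      < volume (⋃ q ∈ P.erase p, D q) + volume B :=
        ENNReal.lt_add_right hfin hBvol_ne
    _ ≤ volume (⋃ q ∈ P, D q) := hkey
end

section
/- Let (α, ≤) be a partially ordered set and let S and S' be finite subsets of α. For a finite subset X ⊆ α write Max(X) = {x ∈ X : there is no y ∈ X with x < y} for its set of maximal elements, and let S'_0 = S' ∩ Max(S ∪ S'). Then Max(S ∪ S') = S'_0 ∪ {p ∈ Max(S) : there is no q ∈ S'_0 with p < q}. -/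
/-- The set of maximal elements of a finite subset `X` of a poset. -/
def maximalIn {α : Type*} [PartialOrder α] (X : Finset α) : Set α :=
  {x | x ∈ X ∧ ∀ y ∈ X, ¬ x < y}

/-- Decomposition of the maximal (skyline) elements of a union: with
`S'₀ = S' ∩ Max(S ∪ S')`, the maximal elements of `S ∪ S'` are exactly `S'₀`
together with those maximal elements of `S` not strictly below any element of
`S'₀`. -/
theorem skyline_union_decomposition {α : Type*} [PartialOrder α] [DecidableEq α]
    (S S' : Finset α) :
    maximalIn (S ∪ S') =
      ((S' : Set α) ∩ maximalIn (S ∪ S')) ∪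
        {p ∈ maximalIn S | ∀ q ∈ (S' : Set α) ∩ maximalIn (S ∪ S'), ¬ p < q} := by
  ext x
  constructor
  · rintro ⟨hx, hmax⟩
    rcases Finset.mem_union.1 hx with hxS | hxS'
    · by_cases hxS'2 : x ∈ S'
      · exact Or.inl ⟨hxS'2, hx, hmax⟩
      · refine Or.inr ⟨⟨hxS, fun y hy => hmax y (Finset.mem_union_left _ hy)⟩,
          fun q hq => hmax q (Finset.mem_union_right _ hq.1)⟩
    · exact Or.inl ⟨hxS', hx, hmax⟩
  · rintro (⟨_, h⟩ | ⟨⟨hxS, hmaxS⟩, hno⟩)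
    · exact h
    · refine ⟨Finset.mem_union_left _ hxS, fun y hy hlt => ?_⟩
      obtain ⟨z, hyz, hz⟩ := Set.Finite.exists_le_maximal
        ((S ∪ S').finite_toSet) (by exact_mod_cast hy)
      have hzmax : z ∈ maximalIn (S ∪ S') := by
        refine ⟨by exact_mod_cast hz.1, fun w hw hzw => ?_⟩
        exact hzw.ne (hz.eq_of_le (by exact_mod_cast hw) hzw.le)
      have hxz : x < z := lt_of_lt_of_le hlt hyz
      rcases Finset.mem_union.1 hzmax.1 with hzS | hzS'
      · exact hmaxS z hzS hxz
      · exact hno z ⟨hzS', hzmax⟩ hxz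
end
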